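/- arXiv:1809.10298 — 9 statements merged into one kernel-verified Lean document; each statement's English description precedes it below -/
import Mathlib

section
/- For every integer t ≥ 3, there exists a coloring of the edges of the complete graph on 2t − 2 vertices with two colors that contains no monochromatic copy of S_t^+. Consequently R(S_t^+, S_t^+) ≥ 2t − 1. -/
open SimpleGraph

/-- `S_t^+`: the star on `t` vertices (center `0`, leaves `1, …, t-1`)
together with one extra edge between the leaves `1` and `2`, forming a triangle. -/
def starPlus (t : ℕ) : SimpleGraph (Fin t) :=
  SimpleGraph.fromRel (fun a b => a.val = 0 ∨ (a.val = 1 ∧ b.val = 2))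

/-- `P_t^+`: the path on `t` vertices `0, 1, …, t-1` (in order) together with
the extra edge between `0` and `2`, forming a triangle at one end. -/
def pathPlus (t : ℕ) : SimpleGraph (Fin t) :=
  SimpleGraph.fromRel (fun a b => b.val = a.val + 1 ∨ (a.val = 0 ∧ b.val = 2))

/-- An edge-coloring `c` of the complete graph on `V` contains a copy of `H`
in color `col`: an injective map of the vertices of `H` into `V` sending every
edge of `H` to a pair colored `col`. -/
def HasCopyIn {V C α : Type*} (c : Sym2 V → C) (col : C) (H : SimpleGraph α) : Prop :=
  ∃ f : α → V, Function.Injective f ∧ ∀ a b : α, H.Adj a b → c s(f a, f b) = col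

/-- An edge-coloring `c` of the complete graph on `V` contains a monochromatic copy of `H`. -/
def HasMonoCopy {V C α : Type*} (c : Sym2 V → C) (H : SimpleGraph α) : Prop :=
  ∃ col : C, HasCopyIn c col H

/-- An edge-coloring `c` of the complete graph on `V` contains a rainbow triangle:
three vertices whose three pairwise edges get pairwise distinct colors. -/
def HasRainbowTriangle {V C : Type*} (c : Sym2 V → C) : Prop :=
  ∃ u v w : V, u ≠ v ∧ u ≠ w ∧ v ≠ w ∧
    c s(u, v) ≠ c s(u, w) ∧ c s(u, v) ≠ c s(v, w) ∧ c s(u, w) ≠ c s(v, w)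

/-- The `k`-color Gallai-Ramsey number `gr_k(K_3 : H)`: the least `n` such that every
`k`-coloring of the edges of `K_n` contains a rainbow triangle or a monochromatic copy of `H`. -/
noncomputable def grK3 (k : ℕ) {α : Type*} (H : SimpleGraph α) : ℕ :=
  sInf {n : ℕ | ∀ c : Sym2 (Fin n) → Fin k, HasRainbowTriangle c ∨ HasMonoCopy c H}

/-- The `2`-color Ramsey number `R(G, H)`: the least `n` such that every red/blue
(`0`/`1`) coloring of the edges of `K_n` contains a red copy of `G` or a blue copy of `H`. -/
noncomputable def ramsey2 {α β : Type*} (G : SimpleGraph α) (H : SimpleGraph β) : ℕ :=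
  sInf {n : ℕ | ∀ c : Sym2 (Fin n) → Fin 2, HasCopyIn c 0 G ∨ HasCopyIn c 1 H}


section Aux

lemma copy_star {V C : Type*} [DecidableEq V] (c : Sym2 V → C) (col : C) (t : ℕ) (ht : 3 ≤ t)
    (v : V) (s : Finset V) (hv : v ∉ s) (hcard : t - 1 ≤ s.card)
    (hs : ∀ z ∈ s, c s(v, z) = col)
    (x y : V) (hx : x ∈ s) (hy : y ∈ s) (hxy : x ≠ y) (hc : c s(x, y) = col) :
    HasCopyIn c col (starPlus t) := by
  set s'' : Finset V := (s.erase x).erase y with hs''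
  have hcard'' : t - 3 ≤ s''.card := by
    have h1 : (s.erase x).card = s.card - 1 := Finset.card_erase_of_mem hx
    have h2 : s''.card = (s.erase x).card - 1 :=
      Finset.card_erase_of_mem (Finset.mem_erase.mpr ⟨Ne.symm hxy, hy⟩)
    omega
  obtain ⟨s3, hs3sub, hs3card⟩ := Finset.exists_subset_card_eq hcard''
  let e : {z // z ∈ s3} ≃ Fin (t - 3) := s3.equivFinOfCardEq hs3card
  set w : Fin (t - 3) → V := fun k => (e.symm k : V) with hw
  have hwmem : ∀ k, w k ∈ s3 := fun k => (e.symm k).2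
  have hwinj : Function.Injective w := fun a b hab => by
    have := Subtype.ext hab
    simpa using e.symm.injective this
  have hwm : ∀ k, w k ∈ s ∧ w k ≠ x ∧ w k ≠ y := by
    intro k
    have h := hs3sub (hwmem k)
    rw [hs''] at h
    have h1 := Finset.mem_erase.mp h
    have h2 := Finset.mem_erase.mp h1.2
    exact ⟨h2.2, h2.1, h1.1⟩
  set f : Fin t → V := fun i =>
    if _h0 : i.val = 0 then v else if _h1 : i.val = 1 then x else if _h2 : i.val = 2 then y
    else w ⟨i.val - 3, by have := i.isLt; omega⟩ with hf
  have hf0 : ∀ i : Fin t, i.val = 0 → f i = v := by intro i h; simp [hf, h]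
  have hf1 : ∀ i : Fin t, i.val = 1 → f i = x := by intro i h; simp [hf, h]
  have hf2 : ∀ i : Fin t, i.val = 2 → f i = y := by intro i h; simp [hf, h]
  have hf3 : ∀ (i : Fin t) (h : 3 ≤ i.val), f i = w ⟨i.val - 3, by have := i.isLt; omega⟩ := by
    intro i h
    simp only [hf]
    rw [dif_neg (by omega), dif_neg (by omega), dif_neg (by omega)]
  have hmem : ∀ i : Fin t, i.val ≠ 0 → f i ∈ s := by
    intro i h
    rcases Nat.lt_or_ge i.val 3 with h3 | h3
    · interval_cases hi : i.val
      · omega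
      · rw [hf1 i hi]; exact hx
      · rw [hf2 i hi]; exact hy
    · rw [hf3 i h3]; exact (hwm _).1
  refine ⟨f, ?_, ?_⟩
  · intro a b hab
    have key : ∀ i : Fin t, (i.val = 0 ∧ f i = v) ∨ (i.val = 1 ∧ f i = x) ∨
        (i.val = 2 ∧ f i = y) ∨ (∃ k : Fin (t - 3), i.val = k.val + 3 ∧ f i = w k) := by
      intro i
      rcases Nat.lt_or_ge i.val 3 with h3 | h3
      · interval_cases hi : i.val
        · exact Or.inl ⟨rfl, hf0 i hi⟩
        · exact Or.inr (Or.inl ⟨rfl, hf1 i hi⟩)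
        · exact Or.inr (Or.inr (Or.inl ⟨rfl, hf2 i hi⟩))
      · exact Or.inr (Or.inr (Or.inr ⟨⟨i.val - 3, by have := i.isLt; omega⟩,
          (Nat.sub_add_cancel h3).symm, hf3 i h3⟩))
    have hvx : v ≠ x := fun h => hv (h ▸ hx)
    have hvy : v ≠ y := fun h => hv (h ▸ hy)
    have hvw : ∀ k, v ≠ w k := fun k h => hv (h ▸ (hwm k).1)
    rcases key a with ⟨ha, hfa⟩ | ⟨ha, hfa⟩ | ⟨ha, hfa⟩ | ⟨ka, ha, hfa⟩ <;>
      rcases key b with ⟨hb, hfb⟩ | ⟨hb, hfb⟩ | ⟨hb, hfb⟩ | ⟨kb, hb, hfb⟩ <;>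
        rw [hfa, hfb] at hab
    · exact Fin.ext (by omega)
    · exact absurd hab hvx
    · exact absurd hab hvy
    · exact absurd hab (hvw _)
    · exact absurd hab.symm hvx
    · exact Fin.ext (by omega)
    · exact absurd hab hxy
    · exact absurd hab.symm (hwm _).2.1
    · exact absurd hab.symm hvy
    · exact absurd hab.symm hxy
    · exact Fin.ext (by omega)
    · exact absurd hab.symm (hwm _).2.2
    · exact absurd hab.symm (hvw _)
    · exact absurd hab (hwm _).2.1
    · exact absurd hab (hwm _).2.2
    · have h' : ka.val = kb.val := congrArg Fin.val (hwinj hab)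
      exact Fin.ext (by omega)
  · intro a b hadj
    rw [starPlus, fromRel_adj] at hadj
    obtain ⟨hne, hrel⟩ := hadj
    have hne' : a.val ≠ b.val := fun h => hne (Fin.ext h)
    rcases hrel with (ha0 | ⟨ha1, hb2⟩) | (hb0 | ⟨hb1, ha2⟩)
    · rw [hf0 a ha0]; exact hs _ (hmem b (by omega))
    · rw [hf1 a ha1, hf2 b hb2]; exact hc
    · rw [hf0 b hb0, Sym2.eq_swap]; exact hs _ (hmem a (by omega))
    · rw [hf1 b hb1, hf2 a ha2, Sym2.eq_swap]; exact hc

lemma fin2_cases : ∀ a : Fin 2, a = 0 ∨ a = 1 := by decide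

lemma fin2_ne {a b : Fin 2} (h : a ≠ b) : a = 1 - b := by
  revert h; revert a b; decide

lemma upper_mem (t : ℕ) (ht : 3 ≤ t) (c : Sym2 (Fin (2 * t + 1)) → Fin 2) :
    HasCopyIn c 0 (starPlus t) ∨ HasCopyIn c 1 (starPlus t) := by
  set v : Fin (2 * t + 1) := ⟨0, by omega⟩ with hv
  -- pigeonhole: some color has ≥ t neighbors of v
  set u : Finset (Fin (2 * t + 1)) := Finset.univ.erase v with hu
  have hucard : u.card = 2 * t := by
    rw [hu, Finset.card_erase_of_mem (Finset.mem_univ v)]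
    simp
  have hsplit := Finset.card_filter_add_card_filter_not
    (s := u) (fun x => c s(v, x) = 0)
  have key : ∃ col : Fin 2, ∃ s : Finset (Fin (2 * t + 1)),
      v ∉ s ∧ t ≤ s.card ∧ ∀ z ∈ s, c s(v, z) = col := by
    rcases Nat.le_or_le t (u.filter (fun x => c s(v, x) = 0)).card with h | h
    · exact ⟨0, u.filter (fun x => c s(v, x) = 0),
        fun hm => (Finset.mem_erase.mp (Finset.mem_filter.mp hm).1).1 rfl, h,
        fun z hz => (Finset.mem_filter.mp hz).2⟩
    · refine ⟨1, u.filter (fun x => ¬ c s(v, x) = 0),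
        fun hm => (Finset.mem_erase.mp (Finset.mem_filter.mp hm).1).1 rfl, by omega,
        fun z hz => ?_⟩
      have := (Finset.mem_filter.mp hz).2
      have := fin2_ne this
      simpa using this
  obtain ⟨col, s, hvs, hcard, hall⟩ := key
  have hmain : ∃ col' : Fin 2, HasCopyIn c col' (starPlus t) := by
    by_cases hex : ∃ x ∈ s, ∃ y ∈ s, x ≠ y ∧ c s(x, y) = col
    · obtain ⟨x, hx, y, hy, hxy, hcxy⟩ := hex
      exact ⟨col, copy_star c col t ht v s hvs (by omega) hall x y hx hy hxy hcxy⟩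
    · push_neg at hex
      -- all edges inside s have the other color
      set col' : Fin 2 := 1 - col with hcol'
      have hin : ∀ x ∈ s, ∀ y ∈ s, x ≠ y → c s(x, y) = col' := by
        intro x hx y hy hxy
        exact fin2_ne (hex x hx y hy hxy)
      obtain ⟨w, hw⟩ := Finset.card_pos.mp (by omega : 0 < s.card)
      set s' := s.erase w with hs'
      have hcard' : t - 1 ≤ s'.card := by
        rw [hs', Finset.card_erase_of_mem hw]; omega
      have h2 : 1 < s'.card := by omega
      obtain ⟨x, hx, y, hy, hxy⟩ := Finset.one_lt_card.mp h2
      have hxs : x ∈ s := Finset.mem_of_mem_erase hx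
      have hys : y ∈ s := Finset.mem_of_mem_erase hy
      refine ⟨col', copy_star c col' t ht w s' (Finset.notMem_erase w s) hcard'
        (fun z hz => hin w hw z (Finset.mem_of_mem_erase hz)
          (Ne.symm (Finset.mem_erase.mp hz).1)) x y hx hy hxy (hin x hxs y hys hxy)⟩
  obtain ⟨col', hcopy⟩ := hmain
  rcases fin2_cases col' with h | h
  · exact Or.inl (h ▸ hcopy)
  · exact Or.inr (h ▸ hcopy)

lemma lower_coloring (t : ℕ) (ht : 3 ≤ t) :
    ∃ c : Sym2 (Fin (2 * t - 2)) → Fin 2, ¬ HasMonoCopy c (starPlus t) := by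
  set c : Sym2 (Fin (2 * t - 2)) → Fin 2 := Sym2.lift
    ⟨fun a b => if (decide (a.val < t - 1) = decide (b.val < t - 1)) then 0 else 1,
     by intro a b; simp only [eq_comm]⟩ with hc
  refine ⟨c, ?_⟩
  rintro ⟨col, f, hinj, hedge⟩
  have hcval : ∀ a b : Fin (2 * t - 2),
      c s(a, b) = if (decide (a.val < t - 1) = decide (b.val < t - 1)) then 0 else 1 := by
    intro a b; rfl
  -- vertices 0 1 2 of Fin t
  have h0 : (0 : ℕ) < t := by omega
  have h1 : (1 : ℕ) < t := by omega
  have h2 : (2 : ℕ) < t := by omega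
  have hadj0 : ∀ i : Fin t, i.val ≠ 0 → (starPlus t).Adj ⟨0, h0⟩ i := by
    intro i hi
    rw [starPlus, fromRel_adj]
    exact ⟨fun h => hi (congrArg Fin.val h).symm, Or.inl (Or.inl rfl)⟩
  have hadj12 : (starPlus t).Adj ⟨1, h1⟩ ⟨2, h2⟩ := by
    rw [starPlus, fromRel_adj]
    exact ⟨by simp [Fin.ext_iff], Or.inl (Or.inr ⟨rfl, rfl⟩)⟩
  rcases fin2_cases col with hcol | hcol
  · -- color 0: all vertices on the same side, but a side has only t-1 vertices
    subst hcol
    have hside : ∀ i : Fin t, decide ((f i).val < t - 1)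
        = decide ((f ⟨0, h0⟩).val < t - 1) := by
      intro i
      by_cases hi : i.val = 0
      · have : i = ⟨0, h0⟩ := Fin.ext hi
        rw [this]
      · have := hedge _ _ (hadj0 i hi)
        rw [hcval] at this
        by_contra hne
        rw [if_neg (fun h => hne h.symm)] at this
        exact absurd this (by decide)
    -- build injection Fin t → Fin (t-1)
    set π : Fin (2 * t - 2) → Fin (t - 1) := fun x =>
      if h : x.val < t - 1 then ⟨x.val, h⟩ else ⟨x.val - (t - 1), by have := x.isLt; omega⟩
      with hπ
    have hinj2 : Function.Injective (π ∘ f) := by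
      intro a b hab
      have hs : decide ((f a).val < t - 1) = decide ((f b).val < t - 1) := by
        rw [hside a, hside b]
      simp only [Function.comp, hπ] at hab
      by_cases h : (f a).val < t - 1
      · have h' : (f b).val < t - 1 := by
          have := hs; simp [h] at this; exact this
        rw [dif_pos h, dif_pos h'] at hab
        exact hinj (Fin.ext (congrArg Fin.val hab : _))
      · have h' : ¬ (f b).val < t - 1 := by
          have := hs; simp [h] at this; omega
        rw [dif_neg h, dif_neg h'] at hab
        have := congrArg Fin.val hab
        simp only at this
        exact hinj (Fin.ext (by omega))
    have := Fintype.card_le_of_injective _ hinj2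
    simp only [Fintype.card_fin] at this
    omega
  · -- color 1: the triangle 0,1,2 gives three pairwise different sides: impossible
    subst hcol
    have key : ∀ a b : Fin t, (starPlus t).Adj a b →
        decide ((f a).val < t - 1) ≠ decide ((f b).val < t - 1) := by
      intro a b hab heq
      have := hedge _ _ hab
      rw [hcval, if_pos heq] at this
      exact absurd this (by decide)
    have k01 := key _ _ (hadj0 ⟨1, h1⟩ (by simp))
    have k02 := key _ _ (hadj0 ⟨2, h2⟩ (by simp))
    have k12 := key _ _ hadj12
    revert k01 k02 k12
    generalize decide ((f ⟨0, h0⟩).val < t - 1) = b0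
    generalize decide ((f ⟨1, h1⟩).val < t - 1) = b1
    generalize decide ((f ⟨2, h2⟩).val < t - 1) = b2
    revert b0 b1 b2; decide


lemma pullback_copy {n m : ℕ} (h : n ≤ m) (c : Sym2 (Fin m) → Fin 2) (col : Fin 2)
    {α : Type*} (H : SimpleGraph α)
    (hcopy : HasCopyIn (fun e => c (e.map (Fin.castLE h))) col H) :
    HasCopyIn c col H := by
  obtain ⟨f, hinj, hedge⟩ := hcopy
  refine ⟨Fin.castLE h ∘ f, (Fin.castLE_injective h).comp hinj, fun a b hab => ?_⟩
  have := hedge a b hab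
  simpa [Sym2.map_pair_eq] using this

end Aux

/-- For every `t ≥ 3`, there is a 2-coloring of the edges of the complete graph on
`2t - 2` vertices with no monochromatic copy of `S_t^+`; consequently
`R(S_t^+, S_t^+) ≥ 2t - 1`. -/
theorem ramsey_starPlus_lower (t : ℕ) (ht : 3 ≤ t) :
    (∃ c : Sym2 (Fin (2 * t - 2)) → Fin 2, ¬ HasMonoCopy c (starPlus t)) ∧
    2 * t - 1 ≤ ramsey2 (starPlus t) (starPlus t) := by
  obtain ⟨c, hc⟩ := lower_coloring t ht
  constructor
  · exact ⟨c, hc⟩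
  · rw [ramsey2]
    refine le_csInf ⟨2 * t + 1, fun c' => upper_mem t ht c'⟩ ?_
    intro n hn
    by_contra hlt
    push_neg at hlt
    have hle : n ≤ 2 * t - 2 := by omega
    have := hn (fun e => c (e.map (Fin.castLE hle)))
    rcases this with h | h
    · exact hc ⟨0, pullback_copy hle c 0 (starPlus t) h⟩
    · exact hc ⟨1, pullback_copy hle c 1 (starPlus t) h⟩
end

section
/- For every even integer k ≥ 2 and every integer t ≥ 3, there exists a coloring of the edges of the complete graph on 2(t − 1)·5^{(k−2)/2} vertices using k colors that contains no rainbow triangle and no monochromatic copy of S_t^+. -/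
open SimpleGraph

namespace GRaux

def pent (a b : ZMod 5) : ℕ := if a - b = 1 ∨ a - b = 4 then 0 else 1

lemma pent_symm (a b : ZMod 5) : pent a b = pent b a := by revert a b; decide

lemma pent_lt (a b : ZMod 5) : pent a b < 2 := by unfold pent; split <;> omega

lemma pent_tri (a b c : ZMod 5) (hab : a ≠ b) (hac : a ≠ c) (hbc : b ≠ c) :
    ¬ (pent a b = pent a c ∧ pent a b = pent b c) := by revert a b c; decide

variable {k t m : ℕ}

def dset (u v : Fin (2*(t-1)) × (Fin m → ZMod 5)) : Finset (Fin m) :=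
  Finset.univ.filter (fun i => u.2 i ≠ v.2 i)

lemma dset_comm (u v : Fin (2*(t-1)) × (Fin m → ZMod 5)) : dset u v = dset v u := by
  ext i; simp [dset, ne_comm]

lemma not_mem_dset {u v : Fin (2*(t-1)) × (Fin m → ZMod 5)} {j : Fin m}
    (h : j ∉ dset u v) : u.2 j = v.2 j := by
  simpa [dset] using h

lemma mem_dset {u v : Fin (2*(t-1)) × (Fin m → ZMod 5)} {j : Fin m}
    (h : j ∈ dset u v) : u.2 j ≠ v.2 j := by
  simpa [dset] using h

def col2 (k t m : ℕ) (hk2 : 2*m+2 ≤ k) (u v : Fin (2*(t-1)) × (Fin m → ZMod 5)) : Fin k :=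
  if h : (dset u v).Nonempty then
    ⟨2*((dset u v).max' h).val + 2 + pent (u.2 ((dset u v).max' h)) (v.2 ((dset u v).max' h)),
      by have h1 := pent_lt (u.2 ((dset u v).max' h)) (v.2 ((dset u v).max' h))
         have h2 := ((dset u v).max' h).isLt; omega⟩
  else if (u.1.val < t-1 ↔ v.1.val < t-1) then ⟨0, by omega⟩ else ⟨1, by omega⟩

lemma col2_val_pos (hk2 : 2*m+2 ≤ k) {u v : Fin (2*(t-1)) × (Fin m → ZMod 5)}
    (h : (dset u v).Nonempty) :
    (col2 k t m hk2 u v).val = 2*((dset u v).max' h).val + 2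
      + pent (u.2 ((dset u v).max' h)) (v.2 ((dset u v).max' h)) := by
  unfold col2; rw [dif_pos h]

lemma col2_neg (hk2 : 2*m+2 ≤ k) {u v : Fin (2*(t-1)) × (Fin m → ZMod 5)}
    (h : ¬ (dset u v).Nonempty) :
    col2 k t m hk2 u v
      = if (u.1.val < t-1 ↔ v.1.val < t-1) then (⟨0, by omega⟩ : Fin k) else ⟨1, by omega⟩ := by
  unfold col2; rw [dif_neg h]

lemma col2_symm (hk2 : 2*m+2 ≤ k) (u v : Fin (2*(t-1)) × (Fin m → ZMod 5)) :
    col2 k t m hk2 u v = col2 k t m hk2 v u := by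
  by_cases h : (dset u v).Nonempty
  · have h' : (dset v u).Nonempty := dset_comm u v ▸ h
    have hm : (dset u v).max' h = (dset v u).max' h' := by
      simp only [dset_comm u v]
    apply Fin.val_injective
    rw [col2_val_pos hk2 h, col2_val_pos hk2 h', hm, pent_symm]
  · have h' : ¬ (dset v u).Nonempty := by rw [dset_comm v u]; exact h
    rw [col2_neg hk2 h, col2_neg hk2 h']
    by_cases hu : u.1.val < t-1 <;> by_cases hv : v.1.val < t-1 <;> simp [hu, hv]

/-- value of col2 when `j` is the max differing coordinate -/
lemma col2_val_of_mem (hk2 : 2*m+2 ≤ k) {u v : Fin (2*(t-1)) × (Fin m → ZMod 5)} {j : Fin m}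
    (hj : j ∈ dset u v) (hub : ∀ x ∈ dset u v, x ≤ j) :
    (col2 k t m hk2 u v).val = 2*j.val + 2 + pent (u.2 j) (v.2 j) := by
  have hne : (dset u v).Nonempty := ⟨j, hj⟩
  have hmax : (dset u v).max' hne = j :=
    le_antisymm (Finset.max'_le _ _ _ hub) (Finset.le_max' _ _ hj)
  rw [col2_val_pos hk2 hne, hmax]

lemma no_rainbow (hk2 : 2*m+2 ≤ k) (u v w : Fin (2*(t-1)) × (Fin m → ZMod 5)) :
    col2 k t m hk2 u v = col2 k t m hk2 u w ∨ col2 k t m hk2 u v = col2 k t m hk2 v w ∨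
      col2 k t m hk2 u w = col2 k t m hk2 v w := by
  set S := (dset u v ∪ dset u w) ∪ dset v w with hS
  by_cases hSne : S.Nonempty
  · set j := S.max' hSne with hj
    have hjS : j ∈ S := S.max'_mem hSne
    have hub1 : ∀ x ∈ dset u v, x ≤ j := fun x hx =>
      Finset.le_max' _ _ (by simp [hS, Finset.mem_union, hx])
    have hub2 : ∀ x ∈ dset u w, x ≤ j := fun x hx =>
      Finset.le_max' _ _ (by simp [hS, Finset.mem_union, hx])
    have hub3 : ∀ x ∈ dset v w, x ≤ j := fun x hx =>
      Finset.le_max' _ _ (by simp [hS, Finset.mem_union, hx])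
    by_cases h1 : j ∈ dset u v <;> by_cases h2 : j ∈ dset u w <;> by_cases h3 : j ∈ dset v w
    · -- all three
      have e1 := col2_val_of_mem hk2 h1 hub1
      have e2 := col2_val_of_mem hk2 h2 hub2
      have e3 := col2_val_of_mem hk2 h3 hub3
      have p1 := pent_lt (u.2 j) (v.2 j)
      have p2 := pent_lt (u.2 j) (w.2 j)
      have p3 := pent_lt (v.2 j) (w.2 j)
      have : pent (u.2 j) (v.2 j) = pent (u.2 j) (w.2 j)
          ∨ pent (u.2 j) (v.2 j) = pent (v.2 j) (w.2 j)
          ∨ pent (u.2 j) (w.2 j) = pent (v.2 j) (w.2 j) := by omega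
      rcases this with h | h | h
      · exact Or.inl (Fin.val_injective (by omega))
      · exact Or.inr (Or.inl (Fin.val_injective (by omega)))
      · exact Or.inr (Or.inr (Fin.val_injective (by omega)))
    · -- uv, uw, not vw : v_j = w_j
      have e1 := col2_val_of_mem hk2 h1 hub1
      have e2 := col2_val_of_mem hk2 h2 hub2
      have hvw := not_mem_dset h3
      exact Or.inl (Fin.val_injective (by rw [e1, e2, hvw]))
    · -- uv, vw, not uw : u_j = w_j
      have e1 := col2_val_of_mem hk2 h1 hub1
      have e3 := col2_val_of_mem hk2 h3 hub3
      have huw := not_mem_dset h2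
      refine Or.inr (Or.inl (Fin.val_injective ?_))
      rw [e1, e3, ← huw, pent_symm]
    · -- only uv : contradiction
      exact absurd ((not_mem_dset h2).trans (not_mem_dset h3).symm) (mem_dset h1)
    · -- uw, vw, not uv : u_j = v_j
      have e2 := col2_val_of_mem hk2 h2 hub2
      have e3 := col2_val_of_mem hk2 h3 hub3
      have huv := not_mem_dset h1
      exact Or.inr (Or.inr (Fin.val_injective (by rw [e2, e3, huv])))
    · -- only uw : contradiction
      have := mem_dset h2
      rw [(not_mem_dset h1), (not_mem_dset h3)] at this
      exact absurd rfl this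
    · -- only vw : contradiction
      have := mem_dset h3
      rw [← (not_mem_dset h1), (not_mem_dset h2)] at this
      exact absurd rfl this
    · -- none : contradicts j ∈ S
      simp [hS, Finset.mem_union, h1, h2, h3] at hjS
  · have h1 : ¬ (dset u v).Nonempty := fun ⟨x, hx⟩ => hSne ⟨x, by simp [hS, Finset.mem_union, hx]⟩
    have h2 : ¬ (dset u w).Nonempty := fun ⟨x, hx⟩ => hSne ⟨x, by simp [hS, Finset.mem_union, hx]⟩
    have h3 : ¬ (dset v w).Nonempty := fun ⟨x, hx⟩ => hSne ⟨x, by simp [hS, Finset.mem_union, hx]⟩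
    rw [col2_neg hk2 h1, col2_neg hk2 h2, col2_neg hk2 h3]
    by_cases hu : u.1.val < t-1 <;> by_cases hv : v.1.val < t-1 <;>
      by_cases hw : w.1.val < t-1 <;> simp [hu, hv, hw]

end GRaux

namespace GRaux

lemma no_mono (hk2 : 2*m+2 ≤ k) (ht : 3 ≤ t) (col : Fin k)
    (f : Fin t → Fin (2*(t-1)) × (Fin m → ZMod 5)) (hf : Function.Injective f)
    (hedge : ∀ a b : Fin t, (starPlus t).Adj a b → col2 k t m hk2 (f a) (f b) = col) :
    False := by
  obtain ⟨i0, hi0⟩ : ∃ i : Fin t, i.val = 0 := ⟨⟨0, by omega⟩, rfl⟩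
  obtain ⟨i1, hi1⟩ : ∃ i : Fin t, i.val = 1 := ⟨⟨1, by omega⟩, rfl⟩
  obtain ⟨i2, hi2⟩ : ∃ i : Fin t, i.val = 2 := ⟨⟨2, by omega⟩, rfl⟩
  have adj0 : ∀ i : Fin t, i ≠ i0 → (starPlus t).Adj i0 i := by
    intro i hi
    rw [starPlus, SimpleGraph.fromRel_adj]
    exact ⟨fun h => hi h.symm, Or.inl (Or.inl hi0)⟩
  have adj12 : (starPlus t).Adj i1 i2 := by
    rw [starPlus, SimpleGraph.fromRel_adj]
    exact ⟨fun h => by rw [h, hi2] at hi1; omega, Or.inl (Or.inr ⟨hi1, hi2⟩)⟩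
  have ne01 : i1 ≠ i0 := fun h => by rw [h, hi0] at hi1; omega
  have ne02 : i2 ≠ i0 := fun h => by rw [h, hi0] at hi2; omega
  have hc01 := hedge _ _ (adj0 _ ne01)
  have hc02 := hedge _ _ (adj0 _ ne02)
  have hc12 := hedge _ _ adj12
  by_cases hcv : 2 ≤ col.val
  · -- pentagon colors
    have hne : ∀ (a b : Fin t), col2 k t m hk2 (f a) (f b) = col →
        (dset (f a) (f b)).Nonempty := by
      intro a b hab
      by_contra hemp
      rw [col2_neg hk2 hemp] at hab
      have : col.val = 0 ∨ col.val = 1 := by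
        split at hab
        · exact Or.inl (congrArg Fin.val hab).symm
        · exact Or.inr (congrArg Fin.val hab).symm
      omega
    have n1 := hne _ _ hc01
    have n2 := hne _ _ hc02
    have n3 := hne _ _ hc12
    have e1 := col2_val_pos hk2 n1
    have e2 := col2_val_pos hk2 n2
    have e3 := col2_val_pos hk2 n3
    rw [hc01] at e1; rw [hc02] at e2; rw [hc12] at e3
    have p1 := pent_lt ((f i0).2 ((dset (f i0) (f i1)).max' n1))
      ((f i1).2 ((dset (f i0) (f i1)).max' n1))
    have p2 := pent_lt ((f i0).2 ((dset (f i0) (f i2)).max' n2))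
      ((f i2).2 ((dset (f i0) (f i2)).max' n2))
    have p3 := pent_lt ((f i1).2 ((dset (f i1) (f i2)).max' n3))
      ((f i2).2 ((dset (f i1) (f i2)).max' n3))
    have hj21 : (dset (f i0) (f i2)).max' n2 = (dset (f i0) (f i1)).max' n1 :=
      Fin.val_injective (by omega)
    have hj31 : (dset (f i1) (f i2)).max' n3 = (dset (f i0) (f i1)).max' n1 :=
      Fin.val_injective (by omega)
    set j := (dset (f i0) (f i1)).max' n1 with hjdef
    rw [hj21] at e2
    rw [hj31] at e3
    have m1 := mem_dset ((dset (f i0) (f i1)).max'_mem n1)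
    have m2 := mem_dset ((dset (f i0) (f i2)).max'_mem n2)
    rw [hj21] at m2
    have m3 := mem_dset ((dset (f i1) (f i2)).max'_mem n3)
    rw [hj31] at m3
    exact pent_tri ((f i0).2 j) ((f i1).2 j) ((f i2).2 j) m1 m2 m3 ⟨by omega, by omega⟩
  · -- base colors
    have hemp : ∀ a b : Fin t, col2 k t m hk2 (f a) (f b) = col →
        ¬ (dset (f a) (f b)).Nonempty := by
      intro a b hab hne
      have h := col2_val_pos hk2 hne
      rw [hab] at h
      omega
    have hsec : ∀ i : Fin t, (f i).2 = (f i0).2 := by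
      intro i
      by_cases hii : i = i0
      · rw [hii]
      · have h := hemp _ _ (hedge _ _ (adj0 i hii))
        funext j
        exact (not_mem_dset (fun hj => h ⟨j, hj⟩)).symm
    have hg : Function.Injective (fun i : Fin t => (f i).1) := by
      intro a b hab
      exact hf (Prod.ext hab ((hsec a).trans (hsec b).symm))
    have hde : ∀ a b : Fin t, ¬ (dset (f a) (f b)).Nonempty := by
      rintro a b ⟨j, hj⟩
      exact mem_dset hj (by rw [hsec a, hsec b])
    have b01 := hc01; rw [col2_neg hk2 (hde _ _)] at b01
    have b02 := hc02; rw [col2_neg hk2 (hde _ _)] at b02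
    have b12 := hc12; rw [col2_neg hk2 (hde _ _)] at b12
    by_cases hx : ((f i0).1.val < t-1 ↔ (f i1).1.val < t-1)
    · rw [if_pos hx] at b01
      have hcol0 : col.val = 0 := (congrArg Fin.val b01).symm
      have hPi : ∀ i : Fin t, ((f i).1.val < t-1 ↔ (f i0).1.val < t-1) := by
        intro i
        by_cases hii : i = i0
        · rw [hii]
        · have hci := hedge _ _ (adj0 i hii)
          rw [col2_neg hk2 (hde _ _)] at hci
          split at hci
          · tauto
          · have h1 : col.val = 1 := (congrArg Fin.val hci).symm
            omega
      by_cases hP : (f i0).1.val < t-1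
      · have hl : ∀ i : Fin t, (f i).1.val < t-1 := fun i => (hPi i).mpr hP
        have hcard := Fintype.card_le_of_injective
          (fun i : Fin t => (⟨(f i).1.val, hl i⟩ : Fin (t-1)))
          (fun a b hab => by
            have hv : (f a).1.val = (f b).1.val := by simpa [Fin.ext_iff] using hab
            exact hg (Fin.val_injective hv))
        simp at hcard
        omega
      · have hl : ∀ i : Fin t, ¬ (f i).1.val < t-1 := fun i h => hP ((hPi i).mp h)
        have hcard := Fintype.card_le_of_injective
          (fun i : Fin t => (⟨(f i).1.val - (t-1),
            by have := (f i).1.isLt; have := hl i; omega⟩ : Fin (t-1)))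
          (fun a b hab => by
            have ha := hl a
            have hb := hl b
            have hv : (f a).1.val - (t-1) = (f b).1.val - (t-1) := by simpa [Fin.ext_iff] using hab
            have heq : (f a).1.val = (f b).1.val := by omega
            exact hg (Fin.val_injective heq))
        simp at hcard
        omega
    · rw [if_neg hx] at b01
      have hcol1 : col.val = 1 := (congrArg Fin.val b01).symm
      have hx2 : ¬ ((f i0).1.val < t-1 ↔ (f i2).1.val < t-1) := by
        intro h
        rw [if_pos h] at b02
        have h0 : col.val = 0 := (congrArg Fin.val b02).symm
        omega
      have hx3 : ¬ ((f i1).1.val < t-1 ↔ (f i2).1.val < t-1) := by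
        intro h
        rw [if_pos h] at b12
        have h0 : col.val = 0 := (congrArg Fin.val b12).symm
        omega
      tauto

end GRaux


/-- For every even `k ≥ 2` and `t ≥ 3`, there is a `k`-coloring of the edges of the
complete graph on `2(t-1)·5^((k-2)/2)` vertices with no rainbow triangle and no
monochromatic copy of `S_t^+`. -/
theorem gallaiRamsey_starPlus_lower_even (k t : ℕ) (hk : 2 ≤ k) (hke : Even k) (ht : 3 ≤ t) :
    ∃ c : Sym2 (Fin (2 * (t - 1) * 5 ^ ((k - 2) / 2))) → Fin k,
      ¬ HasRainbowTriangle c ∧ ¬ HasMonoCopy c (starPlus t) := by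
  obtain ⟨r, hr⟩ := hke
  set m := (k - 2) / 2 with hm
  have hk2 : 2*m+2 ≤ k := by omega
  have hcard : Fintype.card (Fin (2 * (t - 1) * 5 ^ m))
      = Fintype.card (Fin (2*(t-1)) × (Fin m → ZMod 5)) := by
    simp [ZMod.card]
  let e : Fin (2 * (t - 1) * 5 ^ m) ≃ Fin (2*(t-1)) × (Fin m → ZMod 5) :=
    Fintype.equivOfCardEq hcard
  refine ⟨Sym2.lift ⟨fun x y => GRaux.col2 k t m hk2 (e x) (e y),
    fun x y => GRaux.col2_symm hk2 (e x) (e y)⟩, ?_, ?_⟩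
  · rintro ⟨u, v, w, huv, huw, hvw, h1, h2, h3⟩
    simp only [Sym2.lift_mk] at h1 h2 h3
    rcases GRaux.no_rainbow hk2 (e u) (e v) (e w) with h | h | h
    · exact h1 h
    · exact h2 h
    · exact h3 h
  · rintro ⟨col, f, hfinj, hcopy⟩
    refine GRaux.no_mono hk2 ht col (fun i => e (f i))
      (fun a b hab => hfinj (e.injective hab)) ?_
    intro a b hab
    simpa only [Sym2.lift_mk] using hcopy a b hab
end

section
/- For every odd integer k ≥ 1 and every integer t ≥ 3, there exists a coloring of the edges of the complete graph on (t − 1)·5^{(k−1)/2} vertices using k colors that contains no rainbow triangle and no monochromatic copy of S_t^+. -/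
namespace GRaux

abbrev F (m : ℕ) := Fin m → Fin 5

/-- the "sign" predicate on differences in `Fin 5` (pentagon adjacency). -/
abbrev P (d : Fin 5) : Prop := d = 1 ∨ d = 4

lemma P_symm : ∀ a b : Fin 5, P (a - b) ↔ P (b - a) := by decide

lemma fin5_key : ∀ a b c : Fin 5, a ≠ b → a ≠ c → b ≠ c →
    (P (a - b) ↔ P (a - c)) → (P (a - b) ↔ P (b - c)) → False := by decide

def diffSet {m : ℕ} (f g : F m) : Finset (Fin m) := Finset.univ.filter fun j => f j ≠ g j

lemma diffSet_nonempty {m : ℕ} {f g : F m} (h : f ≠ g) : (diffSet f g).Nonempty := by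
  rcases Function.ne_iff.mp h with ⟨j, hj⟩
  exact ⟨j, by simp [diffSet, hj]⟩

def lvl {m : ℕ} (f g : F m) (h : f ≠ g) : Fin m := (diffSet f g).max' (diffSet_nonempty h)

lemma lvl_mem {m : ℕ} (f g : F m) (h : f ≠ g) : f (lvl f g h) ≠ g (lvl f g h) := by
  have := (diffSet f g).max'_mem (diffSet_nonempty h)
  simpa [diffSet, lvl] using this

lemma lvl_spec {m : ℕ} (f g : F m) (h : f ≠ g) {j : Fin m} (hj : lvl f g h < j) : f j = g j := by
  by_contra hne
  exact absurd (Finset.le_max' _ j (by simp [diffSet, hne])) (not_le.mpr hj)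

lemma lvl_unique {m : ℕ} (f g : F m) (h : f ≠ g) {J : Fin m} (hJ : f J ≠ g J)
    (hmax : ∀ j, J < j → f j = g j) : lvl f g h = J := by
  refine le_antisymm ?_ (Finset.le_max' _ _ (by simp [diffSet, hJ]))
  by_contra hlt
  exact lvl_mem f g h (hmax _ (not_le.mp hlt))

def colOf {m : ℕ} (f g : F m) : Fin (2*m+1) :=
  if h : f = g then ⟨0, by omega⟩
  else if P (f (lvl f g h) - g (lvl f g h))
    then ⟨2*(lvl f g h).val+1, by have := (lvl f g h).isLt; omega⟩
    else ⟨2*(lvl f g h).val+2, by have := (lvl f g h).isLt; omega⟩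

lemma colOf_eq_of {m : ℕ} {f g : F m} (h : f ≠ g) {J : Fin m} (hJ : f J ≠ g J)
    (hmax : ∀ j, J < j → f j = g j) :
    colOf f g = if P (f J - g J)
      then (⟨2*J.val+1, by have := J.isLt; omega⟩ : Fin (2*m+1))
      else ⟨2*J.val+2, by have := J.isLt; omega⟩ := by
  have hL : lvl f g h = J := lvl_unique f g h hJ hmax
  subst hL
  rw [colOf, dif_neg h]

lemma colOf_symm {m : ℕ} (f g : F m) : colOf f g = colOf g f := by
  by_cases h : f = g
  · subst h; rfl
  · have h' : g ≠ f := Ne.symm h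
    set J := lvl f g h with hJ
    rw [colOf_eq_of h (lvl_mem f g h) (fun j hj => lvl_spec f g h hj),
        colOf_eq_of h' (Ne.symm (lvl_mem f g h)) (fun j hj => (lvl_spec f g h hj).symm)]
    exact if_congr (P_symm _ _) rfl rfl

lemma colOf_val_zero {m : ℕ} (f g : F m) : (colOf f g).val = 0 ↔ f = g := by
  constructor
  · intro hv
    by_contra h
    rw [colOf, dif_neg h] at hv
    split_ifs at hv <;> simp at hv
  · intro h; subst h; rw [colOf, dif_pos rfl]

lemma colOf_eq_elim {m : ℕ} {f g f' g' : F m} (hfg : f ≠ g) (hf'g' : f' ≠ g')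
    (hc : colOf f g = colOf f' g') :
    lvl f g hfg = lvl f' g' hf'g' ∧
      (P (f (lvl f g hfg) - g (lvl f g hfg)) ↔
        P (f' (lvl f' g' hf'g') - g' (lvl f' g' hf'g'))) := by
  rw [colOf, colOf, dif_neg hfg, dif_neg hf'g'] at hc
  split_ifs at hc with h1 h2 h2 <;> rw [Fin.mk.injEq] at hc <;>
    first
      | exact absurd hc (by omega)
      | exact ⟨Fin.ext (by omega), by tauto⟩

lemma two_equal {m : ℕ} (f g h : F m) :
    colOf f g = colOf f h ∨ colOf f g = colOf g h ∨ colOf f h = colOf g h := by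
  by_cases hfg : f = g
  · subst hfg; exact Or.inr (Or.inr rfl)
  · -- J : max index where not all three agree
    have hne : (Finset.univ.filter fun j => ¬ (f j = g j ∧ f j = h j)).Nonempty := by
      rcases Function.ne_iff.mp hfg with ⟨j, hj⟩
      exact ⟨j, by simp [hj]⟩
    set J := (Finset.univ.filter fun j => ¬ (f j = g j ∧ f j = h j)).max' hne with hJdef
    have hJ : ¬ (f J = g J ∧ f J = h J) :=
      (Finset.mem_filter.mp (Finset.max'_mem _ hne)).2
    have habove : ∀ j, J < j → f j = g j ∧ f j = h j := by
      intro j hj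
      by_contra hcon
      have hjmem : j ∈ Finset.univ.filter fun j => ¬ (f j = g j ∧ f j = h j) :=
        Finset.mem_filter.mpr ⟨Finset.mem_univ _, hcon⟩
      exact absurd (Finset.le_max' _ j hjmem) (not_le.mpr hj)
    by_cases h1 : f J = g J
    · -- f J = g J, f J ≠ h J
      have h2 : f J ≠ h J := fun h2 => hJ ⟨h1, h2⟩
      have h3 : g J ≠ h J := h1 ▸ h2
      have hfh : f ≠ h := fun e => h2 (congrFun e J)
      have hgh : g ≠ h := fun e => h3 (congrFun e J)
      refine Or.inr (Or.inr ?_)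
      rw [colOf_eq_of hfh h2 (fun j hj => (habove j hj).2),
          colOf_eq_of hgh h3 (fun j hj => ((habove j hj).1.symm.trans (habove j hj).2))]
      exact if_congr (by rw [h1]) rfl rfl
    · by_cases h2 : f J = h J
      · -- disjunct 2 : colOf f g = colOf g h
        have h3 : g J ≠ h J := fun e => h1 (h2.trans e.symm)
        have hgh : g ≠ h := fun e => h3 (congrFun e J)
        have hfg' : f ≠ g := hfg
        refine Or.inr (Or.inl ?_)
        rw [colOf_eq_of hfg' h1 (fun j hj => (habove j hj).1),
            colOf_eq_of hgh h3 (fun j hj => ((habove j hj).1.symm.trans (habove j hj).2))]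
        refine if_congr ?_ rfl rfl
        rw [← h2]
        exact P_symm _ _
      · by_cases h3 : g J = h J
        · -- disjunct 1
          have hfh : f ≠ h := fun e => h2 (congrFun e J)
          refine Or.inl ?_
          rw [colOf_eq_of hfg h1 (fun j hj => (habove j hj).1),
              colOf_eq_of hfh h2 (fun j hj => (habove j hj).2)]
          exact if_congr (by rw [h3]) rfl rfl
        · -- all distinct at J
          have hfh : f ≠ h := fun e => h2 (congrFun e J)
          have hgh : g ≠ h := fun e => h3 (congrFun e J)
          rw [colOf_eq_of hfg h1 (fun j hj => (habove j hj).1),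
              colOf_eq_of hfh h2 (fun j hj => (habove j hj).2),
              colOf_eq_of hgh h3 (fun j hj => ((habove j hj).1.symm.trans (habove j hj).2))]
          split_ifs <;> simp

end GRaux



open SimpleGraph

/-- For every odd `k ≥ 1` and `t ≥ 3`, there is a `k`-coloring of the edges of the
complete graph on `(t-1)·5^((k-1)/2)` vertices with no rainbow triangle and no
monochromatic copy of `S_t^+`. -/
theorem gallaiRamsey_starPlus_lower_odd (k t : ℕ) (hk : 1 ≤ k) (hko : Odd k) (ht : 3 ≤ t) :
    ∃ c : Sym2 (Fin ((t - 1) * 5 ^ ((k - 1) / 2))) → Fin k,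
      ¬ HasRainbowTriangle c ∧ ¬ HasMonoCopy c (starPlus t) := by
  classical
  obtain ⟨m, hm⟩ := hko
  have hm' : k = 2 * m + 1 := by omega
  subst hm'
  have hexp : (2 * m + 1 - 1) / 2 = m := by omega
  rw [hexp]
  -- the vertex set, via an equivalence
  have hcard : Fintype.card (Fin (t - 1) × (GRaux.F m)) = (t - 1) * 5 ^ m := by
    simp [GRaux.F]
  let e : Fin ((t - 1) * 5 ^ m) ≃ Fin (t - 1) × GRaux.F m :=
    (Fintype.equivOfCardEq (by simp [hcard]))
  refine ⟨fun s => Sym2.lift ⟨fun u v => GRaux.colOf (e u).2 (e v).2,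
      fun u v => GRaux.colOf_symm _ _⟩ s, ?_, ?_⟩
  · -- no rainbow triangle
    rintro ⟨u, v, w, huv, huw, hvw, h1, h2, h3⟩
    simp only [Sym2.lift_mk] at h1 h2 h3
    rcases GRaux.two_equal (e u).2 (e v).2 (e w).2 with h | h | h
    · exact h1 h
    · exact h2 h
    · exact h3 h
  · -- no monochromatic starPlus
    rintro ⟨col, f, finj, hf⟩
    simp only [Sym2.lift_mk] at hf
    set z0 : Fin t := ⟨0, by omega⟩
    set z1 : Fin t := ⟨1, by omega⟩
    set z2 : Fin t := ⟨2, by omega⟩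
    have adj0 : ∀ j : Fin t, j.val ≠ 0 → (starPlus t).Adj z0 j := by
      intro j hj
      rw [starPlus, SimpleGraph.fromRel_adj]
      exact ⟨fun h => hj (by simp [← h, z0]), Or.inl (Or.inl rfl)⟩
    have adj12 : (starPlus t).Adj z1 z2 := by
      rw [starPlus, SimpleGraph.fromRel_adj]
      refine ⟨fun h => ?_, Or.inl (Or.inr ⟨rfl, rfl⟩)⟩
      have := congrArg Fin.val h
      simp [z1, z2] at this
    by_cases hcol : col.val = 0
    · -- color 0: all second coordinates agree, pigeonhole on Fin (t-1)
      have hsec : ∀ j : Fin t, (e (f j)).2 = (e (f z0)).2 := by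
        intro j
        by_cases hj : j.val = 0
        · have : j = z0 := Fin.ext hj
          rw [this]
        · have hc := hf z0 j (adj0 j hj)
          have : (GRaux.colOf (e (f z0)).2 (e (f j)).2).val = 0 := by rw [hc, hcol]
          exact ((GRaux.colOf_val_zero _ _).mp this).symm
      have hinj : Function.Injective (fun j : Fin t => (e (f j)).1) := by
        intro i j hij
        apply finj
        apply e.injective
        exact Prod.ext hij ((hsec i).trans (hsec j).symm)
      have hle := Fintype.card_le_of_injective _ hinj
      simp at hle
      omega
    · -- nonzero color: monochromatic triangle in a pentagon color, impossible
      set F0 := (e (f z0)).2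
      set F1 := (e (f z1)).2
      set F2 := (e (f z2)).2
      have h01c : GRaux.colOf F0 F1 = col := hf z0 z1 (adj0 z1 (by simp [z1]))
      have h02c : GRaux.colOf F0 F2 = col := hf z0 z2 (adj0 z2 (by simp [z2]))
      have h12c : GRaux.colOf F1 F2 = col := hf z1 z2 adj12
      have ne01 : F0 ≠ F1 := by
        intro h
        exact hcol (by rw [← h01c]; exact (GRaux.colOf_val_zero _ _).mpr h)
      have ne02 : F0 ≠ F2 := by
        intro h
        exact hcol (by rw [← h02c]; exact (GRaux.colOf_val_zero _ _).mpr h)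
      have ne12 : F1 ≠ F2 := by
        intro h
        exact hcol (by rw [← h12c]; exact (GRaux.colOf_val_zero _ _).mpr h)
      obtain ⟨hJ02, hP02⟩ := GRaux.colOf_eq_elim ne01 ne02 (h01c.trans h02c.symm)
      obtain ⟨hJ12, hP12⟩ := GRaux.colOf_eq_elim ne01 ne12 (h01c.trans h12c.symm)
      set J := GRaux.lvl F0 F1 ne01 with hJdef
      have m01 := GRaux.lvl_mem F0 F1 ne01
      have m02 := GRaux.lvl_mem F0 F2 ne02
      have m12 := GRaux.lvl_mem F1 F2 ne12
      rw [← hJ02] at m02 hP02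
      rw [← hJ12] at m12 hP12
      exact GRaux.fin5_key (F0 J) (F1 J) (F2 J) m01 m02 m12 hP02
        (hP12.trans (by rw [show F1 J - F2 J = F1 J - F2 J from rfl]))
end

section
/- For every even integer k ≥ 2 and every integer t ≥ 4, there exists a coloring of the edges of the complete graph on 2(t − 1)·5^{(k−2)/2} vertices using k colors that contains no rainbow triangle and no monochromatic copy of P_t^+. -/
open SimpleGraph

/-- the 5-cycle relation on `Fin 5` -/
def cyc (a b : Fin 5) : Prop := (b.val + 5 - a.val) % 5 = 1 ∨ (b.val + 5 - a.val) % 5 = 4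

instance (a b : Fin 5) : Decidable (cyc a b) := by unfold cyc; infer_instance

lemma cyc_comm (a b : Fin 5) : cyc a b ↔ cyc b a := by revert a b; decide

lemma cyc_tri (a b c : Fin 5) (hab : a ≠ b) (hbc : b ≠ c) (hac : a ≠ c)
    (h1 : cyc a b ↔ cyc b c) (h2 : cyc a b ↔ cyc a c) : False := by
  revert a b c; decide

def diffs {m : ℕ} (x y : Fin m → Fin 5) : Finset (Fin m) :=
  Finset.univ.filter fun i => x i ≠ y i

lemma mem_diffs {m : ℕ} {x y : Fin m → Fin 5} {i : Fin m} : i ∈ diffs x y ↔ x i ≠ y i := by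
  simp [diffs]

lemma diffs_comm {m : ℕ} (x y : Fin m → Fin 5) : diffs x y = diffs y x := by
  ext i; simp [diffs, ne_comm]

lemma eq_of_diffs_empty {m : ℕ} {x y : Fin m → Fin 5} (h : ¬ (diffs x y).Nonempty) : x = y := by
  funext i
  by_contra hi
  exact h ⟨i, mem_diffs.mpr hi⟩

lemma above_max' {m : ℕ} {x y : Fin m → Fin 5} (h : (diffs x y).Nonempty) {j : Fin m}
    (hj : (diffs x y).max' h < j) : x j = y j := by
  by_contra hne
  exact absurd (Finset.le_max' _ j (mem_diffs.mpr hne)) (not_le.mpr hj)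

lemma ne_at_max' {m : ℕ} {x y : Fin m → Fin 5} (h : (diffs x y).Nonempty) :
    x ((diffs x y).max' h) ≠ y ((diffs x y).max' h) :=
  mem_diffs.mp (Finset.max'_mem _ h)

def colNat (t : ℕ) {m : ℕ} (u v : Fin (2*(t-1)) × (Fin m → Fin 5)) : ℕ :=
  if h : (diffs u.2 v.2).Nonempty then
    (if cyc (u.2 ((diffs u.2 v.2).max' h)) (v.2 ((diffs u.2 v.2).max' h))
     then 2 + 2 * ((diffs u.2 v.2).max' h).val
     else 3 + 2 * ((diffs u.2 v.2).max' h).val)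
  else if decide (u.1.val < t-1) = decide (v.1.val < t-1) then 0 else 1

lemma max'_congr {m : ℕ} {s s' : Finset (Fin m)} (h : s = s') (hs : s.Nonempty) :
    s.max' hs = s'.max' (h ▸ hs) := by subst h; rfl

lemma colNat_symm (t : ℕ) {m : ℕ} (u v : Fin (2*(t-1)) × (Fin m → Fin 5)) :
    colNat t u v = colNat t v u := by
  unfold colNat
  by_cases h : (diffs u.2 v.2).Nonempty
  · have h' : (diffs v.2 u.2).Nonempty := diffs_comm v.2 u.2 ▸ h
    rw [dif_pos h, dif_pos h']
    have hm : (diffs u.2 v.2).max' h = (diffs v.2 u.2).max' h' :=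
      max'_congr (diffs_comm u.2 v.2) h
    rw [hm]
    exact if_congr (cyc_comm _ _) rfl rfl
  · have h' : ¬ (diffs v.2 u.2).Nonempty := by rw [diffs_comm]; exact h
    rw [dif_neg h, dif_neg h']
    simp [eq_comm]

lemma colNat_lt (t k : ℕ) {m : ℕ} (hk : 2 ≤ k) (hm : 2 * m + 2 ≤ k)
    (u v : Fin (2*(t-1)) × (Fin m → Fin 5)) : colNat t u v < k := by
  unfold colNat
  split
  · rename_i h
    have := ((diffs u.2 v.2).max' h).isLt
    split <;> omega
  · split <;> omega

lemma colNat_eq_zero {t : ℕ} {m : ℕ} {u v : Fin (2*(t-1)) × (Fin m → Fin 5)}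
    (h : colNat t u v = 0) :
    u.2 = v.2 ∧ decide (u.1.val < t-1) = decide (v.1.val < t-1) := by
  unfold colNat at h
  split at h
  · split at h <;> omega
  · rename_i hne
    refine ⟨eq_of_diffs_empty hne, ?_⟩
    split at h
    · assumption
    · omega

/-- if `u.2 = v.2` then edges `vw` and `uw` of positive level get the same color. -/
lemma colNat_congr_left (t : ℕ) {m : ℕ} {u v w : Fin (2*(t-1)) × (Fin m → Fin 5)}
    (h2 : u.2 = v.2) (hne : (diffs v.2 w.2).Nonempty) : colNat t v w = colNat t u w := by
  have hd : diffs v.2 w.2 = diffs u.2 w.2 := by rw [h2]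
  have hne' : (diffs u.2 w.2).Nonempty := hd ▸ hne
  unfold colNat
  rw [dif_pos hne, dif_pos hne', ← max'_congr hd hne]
  exact if_congr (by rw [congrFun h2 ((diffs v.2 w.2).max' hne)]) rfl rfl

/-- if `v.2 = w.2` then edges `uv` and `uw` of positive level get the same color. -/
lemma colNat_congr_right (t : ℕ) {m : ℕ} {u v w : Fin (2*(t-1)) × (Fin m → Fin 5)}
    (h2 : v.2 = w.2) (hne : (diffs u.2 v.2).Nonempty) : colNat t u v = colNat t u w := by
  have hd : diffs u.2 v.2 = diffs u.2 w.2 := by rw [h2]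
  have hne' : (diffs u.2 w.2).Nonempty := hd ▸ hne
  unfold colNat
  rw [dif_pos hne, dif_pos hne', ← max'_congr hd hne]
  exact if_congr (by rw [congrFun h2 ((diffs u.2 v.2).max' hne)]) rfl rfl

lemma colNat_pos (t : ℕ) {m : ℕ} {u v : Fin (2*(t-1)) × (Fin m → Fin 5)}
    (h : (diffs u.2 v.2).Nonempty) :
    colNat t u v = if cyc (u.2 ((diffs u.2 v.2).max' h)) (v.2 ((diffs u.2 v.2).max' h))
     then 2 + 2 * ((diffs u.2 v.2).max' h).val
     else 3 + 2 * ((diffs u.2 v.2).max' h).val := by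
  unfold colNat; rw [dif_pos h]

lemma colNat_base (t : ℕ) {m : ℕ} {u v : Fin (2*(t-1)) × (Fin m → Fin 5)}
    (h : ¬ (diffs u.2 v.2).Nonempty) :
    colNat t u v = if decide (u.1.val < t-1) = decide (v.1.val < t-1) then 0 else 1 := by
  unfold colNat; rw [dif_neg h]

lemma boolTwo (a b c : Bool) :
    ((if a = b then (0:ℕ) else 1) = (if b = c then 0 else 1)) ∨
    ((if b = c then (0:ℕ) else 1) = (if a = c then 0 else 1)) ∨
    ((if a = b then (0:ℕ) else 1) = (if a = c then 0 else 1)) := by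
  rcases a <;> rcases b <;> rcases c <;> simp

lemma twoEq (t : ℕ) {m : ℕ} (u v w : Fin (2*(t-1)) × (Fin m → Fin 5)) :
    colNat t u v = colNat t v w ∨ colNat t v w = colNat t u w ∨
      colNat t u v = colNat t u w := by
  by_cases h1 : (diffs u.2 v.2).Nonempty
  · by_cases h2 : (diffs v.2 w.2).Nonempty
    · rcases lt_trichotomy ((diffs u.2 v.2).max' h1) ((diffs v.2 w.2).max' h2) with hlt | heq | hgt
      · -- i1 < i2 : colNat v w = colNat u w
        refine Or.inr (Or.inl ?_)
        have huv2 : u.2 ((diffs v.2 w.2).max' h2) = v.2 ((diffs v.2 w.2).max' h2) :=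
          above_max' h1 hlt
        have hvw2 := ne_at_max' h2
        have huw2 : u.2 ((diffs v.2 w.2).max' h2) ≠ w.2 ((diffs v.2 w.2).max' h2) := by
          rw [huv2]; exact hvw2
        have h3 : (diffs u.2 w.2).Nonempty := ⟨_, mem_diffs.mpr huw2⟩
        have hi3 : (diffs u.2 w.2).max' h3 = (diffs v.2 w.2).max' h2 := by
          apply le_antisymm
          · by_contra hc
            push_neg at hc
            have e1 : u.2 ((diffs u.2 w.2).max' h3) = v.2 ((diffs u.2 w.2).max' h3) :=
              above_max' h1 (hlt.trans hc)
            have e2 : v.2 ((diffs u.2 w.2).max' h3) = w.2 ((diffs u.2 w.2).max' h3) :=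
              above_max' h2 hc
            exact (ne_at_max' h3) (e1.trans e2)
          · exact Finset.le_max' _ _ (mem_diffs.mpr huw2)
        rw [colNat_pos t h2, colNat_pos t h3, hi3]
        exact if_congr (by rw [huv2]) rfl rfl
      · -- i1 = i2
        by_cases huw : u.2 ((diffs u.2 v.2).max' h1) = w.2 ((diffs u.2 v.2).max' h1)
        · -- colNat u v = colNat v w
          refine Or.inl ?_
          rw [colNat_pos t h1, colNat_pos t h2, ← heq]
          refine if_congr ?_ rfl rfl
          rw [huw]
          exact cyc_comm _ _
        · have h3 : (diffs u.2 w.2).Nonempty := ⟨_, mem_diffs.mpr huw⟩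
          have hi3 : (diffs u.2 w.2).max' h3 = (diffs u.2 v.2).max' h1 := by
            apply le_antisymm
            · by_contra hc
              push_neg at hc
              have e1 : u.2 ((diffs u.2 w.2).max' h3) = v.2 ((diffs u.2 w.2).max' h3) :=
                above_max' h1 hc
              have e2 : v.2 ((diffs u.2 w.2).max' h3) = w.2 ((diffs u.2 w.2).max' h3) :=
                above_max' h2 (heq ▸ hc)
              exact (ne_at_max' h3) (e1.trans e2)
            · exact Finset.le_max' _ _ (mem_diffs.mpr huw)
          rw [colNat_pos t h1, colNat_pos t h2, colNat_pos t h3, hi3, ← heq]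
          split_ifs <;> simp
      · -- i2 < i1 : colNat u v = colNat u w
        refine Or.inr (Or.inr ?_)
        have hvw1 : v.2 ((diffs u.2 v.2).max' h1) = w.2 ((diffs u.2 v.2).max' h1) :=
          above_max' h2 hgt
        have huv1 := ne_at_max' h1
        have huw1 : u.2 ((diffs u.2 v.2).max' h1) ≠ w.2 ((diffs u.2 v.2).max' h1) := by
          rw [← hvw1]; exact huv1
        have h3 : (diffs u.2 w.2).Nonempty := ⟨_, mem_diffs.mpr huw1⟩
        have hi3 : (diffs u.2 w.2).max' h3 = (diffs u.2 v.2).max' h1 := by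
          apply le_antisymm
          · by_contra hc
            push_neg at hc
            have e2 : v.2 ((diffs u.2 w.2).max' h3) = w.2 ((diffs u.2 w.2).max' h3) :=
              above_max' h2 (hgt.trans hc)
            have e1 : u.2 ((diffs u.2 w.2).max' h3) = v.2 ((diffs u.2 w.2).max' h3) :=
              above_max' h1 hc
            exact (ne_at_max' h3) (e1.trans e2)
          · exact Finset.le_max' _ _ (mem_diffs.mpr huw1)
        rw [colNat_pos t h1, colNat_pos t h3, hi3]
        exact if_congr (by rw [hvw1]) rfl rfl
    · -- v.2 = w.2 : colNat u v = colNat u w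
      exact Or.inr (Or.inr (colNat_congr_right t (eq_of_diffs_empty h2) h1))
  · by_cases h2 : (diffs v.2 w.2).Nonempty
    · exact Or.inr (Or.inl (colNat_congr_left t (eq_of_diffs_empty h1) h2))
    · have h3 : ¬ (diffs u.2 w.2).Nonempty := by
        rw [show u.2 = v.2 from eq_of_diffs_empty h1, show v.2 = w.2 from eq_of_diffs_empty h2]
        simp [diffs]
      rw [colNat_base t h1, colNat_base t h2, colNat_base t h3]
      exact boolTwo _ _ _

lemma colNat_eq_one {t : ℕ} {m : ℕ} {u v : Fin (2*(t-1)) × (Fin m → Fin 5)}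
    (h : colNat t u v = 1) :
    u.2 = v.2 ∧ decide (u.1.val < t-1) ≠ decide (v.1.val < t-1) := by
  unfold colNat at h
  split at h
  · split at h <;> omega
  · rename_i hne
    refine ⟨eq_of_diffs_empty hne, ?_⟩
    split at h
    · omega
    · assumption

lemma ite_inj {P Q : Prop} [Decidable P] [Decidable Q] {A B : ℕ} (hAB : A ≠ B)
    (h : (if P then A else B) = (if Q then A else B)) : P ↔ Q := by
  split_ifs at h <;> tauto

lemma monoTri (t : ℕ) {m : ℕ} (u v w : Fin (2*(t-1)) × (Fin m → Fin 5))
    (e1 : colNat t u v = colNat t v w) (e2 : colNat t v w = colNat t u w) :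
    colNat t u v = 0 := by
  by_cases h1 : (diffs u.2 v.2).Nonempty
  · exfalso
    have h2 : (diffs v.2 w.2).Nonempty := by
      by_contra hc
      rw [colNat_pos t h1, colNat_base t hc] at e1
      split_ifs at e1 <;> omega
    have h3 : (diffs u.2 w.2).Nonempty := by
      by_contra hc
      rw [colNat_pos t h2, colNat_base t hc] at e2
      split_ifs at e2 <;> omega
    rw [colNat_pos t h1, colNat_pos t h2] at e1
    rw [colNat_pos t h2, colNat_pos t h3] at e2
    have hv12 : ((diffs v.2 w.2).max' h2).val = ((diffs u.2 v.2).max' h1).val := by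
      split_ifs at e1 <;> omega
    have hv23 : ((diffs u.2 w.2).max' h3).val = ((diffs u.2 v.2).max' h1).val := by
      split_ifs at e2 <;> omega
    have hi12 : (diffs v.2 w.2).max' h2 = (diffs u.2 v.2).max' h1 := Fin.ext hv12
    have hi23 : (diffs u.2 w.2).max' h3 = (diffs u.2 v.2).max' h1 := Fin.ext hv23
    rw [hi12] at e1
    rw [hi12, hi23] at e2
    have hab := ne_at_max' h1
    have hbc := ne_at_max' h2
    have hac := ne_at_max' h3
    rw [hi12] at hbc
    rw [hi23] at hac
    have q1 := ite_inj (by omega) e1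
    have q2 := ite_inj (by omega) e2
    exact cyc_tri _ _ _ hab hbc hac q1 (q1.trans q2)
  · rw [colNat_base t h1]
    split_ifs with hp
    · rfl
    · exfalso
      have huv1 : colNat t u v = 1 := by rw [colNat_base t h1]; rw [if_neg hp]
      have hvw1 := colNat_eq_one (e1 ▸ huv1)
      have huw1 := colNat_eq_one (e2 ▸ (e1 ▸ huv1))
      have key : ∀ a b c : Bool, a ≠ b → b ≠ c → a = c := by decide
      exact huw1.2 (key _ _ _ hp hvw1.2)

lemma pathPlus_adj_succ {t : ℕ} (j : ℕ) (hj : j + 1 < t) :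
    (pathPlus t).Adj ⟨j, by omega⟩ ⟨j+1, hj⟩ := by
  rw [pathPlus, SimpleGraph.fromRel_adj]
  refine ⟨?_, Or.inl (Or.inl rfl)⟩
  intro h
  rw [Fin.mk.injEq] at h
  omega

lemma pathPlus_adj_02 {t : ℕ} (ht : 4 ≤ t) :
    (pathPlus t).Adj ⟨0, by omega⟩ ⟨2, by omega⟩ := by
  rw [pathPlus, SimpleGraph.fromRel_adj]
  refine ⟨?_, Or.inl (Or.inr ⟨rfl, rfl⟩)⟩
  intro h
  rw [Fin.mk.injEq] at h
  omega

/-- A connected mono copy in color `0` forces everything into one "part", contradiction. -/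
lemma no_zero_copy (t : ℕ) {m : ℕ} (ht : 4 ≤ t)
    (f : Fin t → Fin (2*(t-1)) × (Fin m → Fin 5)) (hinj : Function.Injective f)
    (h0 : ∀ a b : Fin t, (pathPlus t).Adj a b → colNat t (f a) (f b) = 0) : False := by
  have ht0 : (0:ℕ) < t := by omega
  have chain : ∀ j : ℕ, (hj : j < t) →
      (f ⟨j, hj⟩).2 = (f ⟨0, ht0⟩).2 ∧
      decide ((f ⟨j, hj⟩).1.val < t-1) = decide ((f ⟨0, ht0⟩).1.val < t-1) := by
    intro j
    induction j with
    | zero => intro hj; exact ⟨rfl, rfl⟩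
    | succ n ih =>
      intro hj
      have hn : n < t := by omega
      obtain ⟨ih2, ihb⟩ := ih hn
      have hadj := pathPlus_adj_succ n hj
      have hcol := colNat_eq_zero (h0 _ _ hadj)
      exact ⟨hcol.1.symm.trans ih2, hcol.2.symm.trans ihb⟩
  -- all vertices have the same second component
  have hsnd : ∀ j : Fin t, (f j).2 = (f ⟨0, ht0⟩).2 := by
    intro j; have := chain j.val j.isLt; simpa using this.1
  have hfst : ∀ j : Fin t, decide ((f j).1.val < t-1) = decide ((f ⟨0, ht0⟩).1.val < t-1) := by
    intro j; have := chain j.val j.isLt; simpa using this.2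
  have hiff : ∀ j : Fin t, ((f j).1.val < t-1 ↔ (f ⟨0, ht0⟩).1.val < t-1) := by
    intro j
    have := hfst j
    simpa [decide_eq_decide] using this
  have final : ∀ φ : Fin t → Fin (t-1), Function.Injective φ → False := by
    intro φ hφ
    have := Fintype.card_le_of_injective φ hφ
    simp only [Fintype.card_fin] at this
    omega
  have feq : ∀ j1 j2 : Fin t, (f j1).1.val = (f j2).1.val → j1 = j2 := by
    intro j1 j2 hval
    apply hinj
    apply Prod.ext
    · exact Fin.ext hval
    · rw [hsnd j1, hsnd j2]
  by_cases h0p : (f ⟨0, ht0⟩).1.val < t - 1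
  · exact final (fun j => ⟨(f j).1.val, (hiff j).mpr h0p⟩)
      (fun j1 j2 h => feq j1 j2 (by simpa using congrArg Fin.val h))
  · refine final (fun j => ⟨(f j).1.val - (t-1), ?_⟩) ?_
    · have h1 := (f j).1.isLt
      have h2 : ¬ (f j).1.val < t - 1 := fun h => h0p ((hiff j).mp h)
      omega
    · intro j1 j2 h
      have hv := congrArg Fin.val h
      simp only at hv
      have h1 : ¬ (f j1).1.val < t - 1 := fun h' => h0p ((hiff j1).mp h')
      have h2 : ¬ (f j2).1.val < t - 1 := fun h' => h0p ((hiff j2).mp h')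
      exact feq j1 j2 (by omega)

/-- For every even `k ≥ 2` and `t ≥ 4`, there is a `k`-coloring of the edges of the
complete graph on `2(t-1)·5^((k-2)/2)` vertices with no rainbow triangle and no
monochromatic copy of `P_t^+`. -/
theorem gallaiRamsey_pathPlus_lower_even (k t : ℕ) (hk : 2 ≤ k) (hke : Even k) (ht : 4 ≤ t) :
    ∃ c : Sym2 (Fin (2 * (t - 1) * 5 ^ ((k - 2) / 2))) → Fin k,
      ¬ HasRainbowTriangle c ∧ ¬ HasMonoCopy c (pathPlus t) := by
  have hk0 : 0 < k := by omega
  have hm : 2 * ((k-2)/2) + 2 ≤ k := by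
    obtain ⟨r, hr⟩ := hke
    omega
  let e : Fin (2 * (t - 1) * 5 ^ ((k - 2) / 2)) ≃
      (Fin (2*(t-1)) × (Fin ((k-2)/2) → Fin 5)) :=
    finProdFinEquiv.symm.trans
      ((Equiv.refl (Fin (2*(t-1)))).prodCongr finFunctionFinEquiv.symm)
  refine ⟨Sym2.lift ⟨fun a b => ⟨colNat t (e a) (e b) % k, Nat.mod_lt _ hk0⟩,
    fun a b => Fin.ext (show colNat t (e a) (e b) % k = colNat t (e b) (e a) % k by
      rw [colNat_symm])⟩, ?_, ?_⟩
  · intro h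
    unfold HasRainbowTriangle at h
    obtain ⟨u, v, w, huv, huw, hvw, n1, n2, n3⟩ := h
    simp only [Sym2.lift_mk] at n1 n2 n3
    rcases twoEq t (e u) (e v) (e w) with h | h | h
    · exact n2 (Fin.ext (show colNat t (e u) (e v) % k = colNat t (e v) (e w) % k by rw [h]))
    · exact n3 (Fin.ext (show colNat t (e u) (e w) % k = colNat t (e v) (e w) % k by rw [h]))
    · exact n1 (Fin.ext (show colNat t (e u) (e v) % k = colNat t (e u) (e w) % k by rw [h]))
  · intro h
    unfold HasMonoCopy HasCopyIn at h
    obtain ⟨col, f, hinj, hedge⟩ := h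
    have ginj : Function.Injective (fun j => e (f j)) := fun a b hab => hinj (e.injective hab)
    have hcol' : ∀ a b : Fin t, (pathPlus t).Adj a b →
        colNat t (e (f a)) (e (f b)) = col.val := by
      intro a b hab
      have h1 := hedge a b hab
      rw [Sym2.lift_mk] at h1
      have h2 := congrArg Fin.val h1
      simp only at h2
      rw [← Nat.mod_eq_of_lt (colNat_lt t k hk hm (e (f a)) (e (f b)))]
      exact h2
    have ht01 : (pathPlus t).Adj ⟨0, by omega⟩ ⟨1, by omega⟩ := pathPlus_adj_succ 0 (by omega)
    have ht12 : (pathPlus t).Adj ⟨1, by omega⟩ ⟨2, by omega⟩ := pathPlus_adj_succ 1 (by omega)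
    have ht02 : (pathPlus t).Adj ⟨0, by omega⟩ ⟨2, by omega⟩ := pathPlus_adj_02 ht
    have e1 : colNat t (e (f ⟨0, by omega⟩)) (e (f ⟨1, by omega⟩))
        = colNat t (e (f ⟨1, by omega⟩)) (e (f ⟨2, by omega⟩)) := by
      rw [hcol' _ _ ht01, hcol' _ _ ht12]
    have e2 : colNat t (e (f ⟨1, by omega⟩)) (e (f ⟨2, by omega⟩))
        = colNat t (e (f ⟨0, by omega⟩)) (e (f ⟨2, by omega⟩)) := by
      rw [hcol' _ _ ht12, hcol' _ _ ht02]
    have h0 := monoTri t _ _ _ e1 e2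
    have hc0 : col.val = 0 := by rw [← hcol' _ _ ht01, h0]
    exact no_zero_copy t ht (fun j => e (f j)) ginj
      (fun a b hab => by rw [hcol' a b hab, hc0])
end

section
/- For every odd integer k ≥ 1 and every integer t ≥ 4, there exists a coloring of the edges of the complete graph on (t − 1)·5^{(k−1)/2} vertices using k colors that contains no rainbow triangle and no monochromatic copy of P_t^+. -/
open SimpleGraph

namespace GRAux

def levD (m d e : ℕ) : ℕ := Nat.findGreatest (fun j => d / 5^j ≠ e / 5^j) m

def colD (m d e : ℕ) : ℕ :=
  if d = e then 2*m
  else if ((d / 5^(levD m d e) : ℕ) : ZMod 5) - ((e / 5^(levD m d e) : ℕ) : ZMod 5) = 1 ∨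
          ((d / 5^(levD m d e) : ℕ) : ZMod 5) - ((e / 5^(levD m d e) : ℕ) : ZMod 5) = 4
  then 2*(levD m d e) else 2*(levD m d e)+1

lemma levD_le (m d e : ℕ) : levD m d e ≤ m := Nat.findGreatest_le m

lemma levD_spec {m d e : ℕ} (hne : d ≠ e) :
    d / 5^(levD m d e) ≠ e / 5^(levD m d e) := by
  have h0 : (fun j => d / 5^j ≠ e / 5^j) 0 := by simpa using hne
  exact Nat.findGreatest_spec (P := fun j => d / 5^j ≠ e / 5^j) (Nat.zero_le m) h0

lemma levD_symm (m d e : ℕ) : levD m d e = levD m e d := by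
  rcases eq_or_ne d e with h | h
  · subst h; rfl
  · apply le_antisymm
    · exact Nat.le_findGreatest (P := fun j => e / 5^j ≠ d / 5^j) (levD_le m d e)
        (Ne.symm (levD_spec h))
    · exact Nat.le_findGreatest (P := fun j => d / 5^j ≠ e / 5^j) (levD_le m e d)
        (Ne.symm (levD_spec (Ne.symm h)))

lemma levD_lt {m d e : ℕ} (hne : d ≠ e) (hd : d < 5^m) (he : e < 5^m) :
    levD m d e < m := by
  have hspec := levD_spec (m := m) hne
  have hle := levD_le m d e
  rcases lt_or_eq_of_le hle with h | h
  · exact h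
  · exfalso
    apply hspec
    rw [h, Nat.div_eq_of_lt hd, Nat.div_eq_of_lt he]

lemma levD_agree {m d e : ℕ} (hd : d < 5^m) (he : e < 5^m) {i : ℕ}
    (hi : levD m d e < i) : d / 5^i = e / 5^i := by
  rcases le_or_gt i m with h | h
  · by_contra hne
    exact Nat.findGreatest_is_greatest hi h hne
  · rw [Nat.div_eq_of_lt (lt_of_lt_of_le hd (Nat.pow_le_pow_right (by norm_num) h.le)),
      Nat.div_eq_of_lt (lt_of_lt_of_le he (Nat.pow_le_pow_right (by norm_num) h.le))]

lemma pent_symm : ∀ a b : ZMod 5, (a - b = 1 ∨ a - b = 4) ↔ (b - a = 1 ∨ b - a = 4) := by decide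

lemma colD_symm (m d e : ℕ) : colD m d e = colD m e d := by
  unfold colD
  rcases eq_or_ne d e with h | h
  · simp [h]
  · rw [if_neg h, if_neg (Ne.symm h), levD_symm m e d]
    by_cases hp : ((d / 5^(levD m d e) : ℕ) : ZMod 5) - ((e / 5^(levD m d e) : ℕ) : ZMod 5) = 1 ∨
        ((d / 5^(levD m d e) : ℕ) : ZMod 5) - ((e / 5^(levD m d e) : ℕ) : ZMod 5) = 4
    · rw [if_pos hp, if_pos ((pent_symm _ _).mp hp)]
    · rw [if_neg hp, if_neg (fun hq => hp ((pent_symm _ _).mp hq))]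

lemma colD_lt {m d e : ℕ} (hd : d < 5^m) (he : e < 5^m) : colD m d e < 2*m+1 := by
  unfold colD
  rcases eq_or_ne d e with h | h
  · simp [h]
  · have := levD_lt h hd he
    rw [if_neg h]
    split <;> omega

lemma colD_base {m d e : ℕ} (hd : d < 5^m) (he : e < 5^m) (h : colD m d e = 2*m) : d = e := by
  by_contra hne
  have := levD_lt hne hd he
  unfold colD at h
  rw [if_neg hne] at h
  revert h; split <;> omega

lemma colD_ne_cases : ∀ a b : ZMod 5, a ≠ b → ¬(a - b = 1 ∨ a - b = 4) → (a - b = 2 ∨ a - b = 3) := by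
  decide

lemma colD_spec {m d e : ℕ} (hne : d ≠ e) (hd : d < 5^m) (he : e < 5^m) :
    (colD m d e = 2*(levD m d e) ∧
      (((d / 5^(levD m d e) : ℕ) : ZMod 5) - ((e / 5^(levD m d e) : ℕ) : ZMod 5) = 1 ∨
       ((d / 5^(levD m d e) : ℕ) : ZMod 5) - ((e / 5^(levD m d e) : ℕ) : ZMod 5) = 4)) ∨
    (colD m d e = 2*(levD m d e) + 1 ∧
      (((d / 5^(levD m d e) : ℕ) : ZMod 5) - ((e / 5^(levD m d e) : ℕ) : ZMod 5) = 2 ∨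
       ((d / 5^(levD m d e) : ℕ) : ZMod 5) - ((e / 5^(levD m d e) : ℕ) : ZMod 5) = 3)) := by
  set J := levD m d e with hJ
  have hdig : ((d / 5^J : ℕ) : ZMod 5) ≠ ((e / 5^J : ℕ) : ZMod 5) := by
    rw [Ne, ZMod.natCast_eq_natCast_iff']
    intro hmod
    apply levD_spec (m := m) hne
    have hq : d / 5^(J+1) = e / 5^(J+1) := levD_agree hd he (Nat.lt_succ_self J)
    have h1 : d / 5^J = 5 * (d / 5^(J+1)) + (d / 5^J) % 5 := by
      rw [pow_succ, ← Nat.div_div_eq_div_mul]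
      omega
    have h2 : e / 5^J = 5 * (e / 5^(J+1)) + (e / 5^J) % 5 := by
      rw [pow_succ, ← Nat.div_div_eq_div_mul]
      omega
    rw [← hJ, h1, h2, hq, hmod]
  unfold colD
  rw [if_neg hne, ← hJ]
  by_cases hp : ((d / 5^J : ℕ) : ZMod 5) - ((e / 5^J : ℕ) : ZMod 5) = 1 ∨
      ((d / 5^J : ℕ) : ZMod 5) - ((e / 5^J : ℕ) : ZMod 5) = 4
  · rw [if_pos hp]; left; exact ⟨rfl, hp⟩
  · rw [if_neg hp]; right; exact ⟨rfl, colD_ne_cases _ _ hdig hp⟩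

lemma colD_eq_of_agree {m d e f : ℕ} (hde : d ≠ e) (hdf : d ≠ f)
    (hJ : levD m d f = levD m d e) (hq : e / 5^(levD m d e) = f / 5^(levD m d e)) :
    colD m d e = colD m d f := by
  unfold colD
  rw [if_neg hde, if_neg hdf, hJ, ← hq]

lemma levD_max {m d e f : ℕ} (hne : d ≠ e) (hd : d < 5^m) (he : e < 5^m) (hf : f < 5^m) :
    levD m d e ≤ max (levD m d f) (levD m e f) := by
  by_contra h
  push_neg at h
  have h1 : d / 5^(levD m d e) = f / 5^(levD m d e) :=
    levD_agree hd hf (lt_of_le_of_lt (le_max_left _ _) h)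
  have h2 : e / 5^(levD m d e) = f / 5^(levD m d e) :=
    levD_agree he hf (lt_of_le_of_lt (le_max_right _ _) h)
  exact levD_spec (m := m) hne (h1.trans h2.symm)

lemma pent_add1 : ∀ a b c : ZMod 5, (a - b = 1 ∨ a - b = 4) → (b - c = 1 ∨ b - c = 4) →
    ¬(a - c = 1 ∨ a - c = 4) := by decide

lemma pent_add2 : ∀ a b c : ZMod 5, (a - b = 2 ∨ a - b = 3) → (b - c = 2 ∨ b - c = 3) →
    ¬(a - c = 2 ∨ a - c = 3) := by decide

lemma colD_diag (m d : ℕ) : colD m d d = 2*m := by simp [colD]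

end GRAux

/-- For every odd `k ≥ 1` and `t ≥ 4`, there is a `k`-coloring of the edges of the
complete graph on `(t-1)·5^((k-1)/2)` vertices with no rainbow triangle and no
monochromatic copy of `P_t^+`. -/
theorem gallaiRamsey_pathPlus_lower_odd (k t : ℕ) (hk : 1 ≤ k) (hko : Odd k) (ht : 4 ≤ t) :
    ∃ c : Sym2 (Fin ((t - 1) * 5 ^ ((k - 1) / 2))) → Fin k,
      ¬ HasRainbowTriangle c ∧ ¬ HasMonoCopy c (pathPlus t) := by
  obtain ⟨mm, hmm⟩ := hko
  set m := (k - 1) / 2 with hmdef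
  have hkm : k = 2 * m + 1 := by omega
  have ht1 : 0 < t - 1 := by omega
  have hq : ∀ x : Fin ((t - 1) * 5 ^ m), x.val / (t - 1) < 5 ^ m := by
    intro x
    rw [Nat.div_lt_iff_lt_mul ht1]
    exact x.isLt.trans_le (mul_comm (t - 1) (5 ^ m)).le
  set cfun : Sym2 (Fin ((t - 1) * 5 ^ m)) → Fin k :=
    Sym2.lift ⟨fun x y => ⟨GRAux.colD m (x.val / (t - 1)) (y.val / (t - 1)),
        hkm ▸ GRAux.colD_lt (hq x) (hq y)⟩,
      fun x y => Fin.ext (GRAux.colD_symm m _ _)⟩ with hcdef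
  have hc : ∀ x y : Fin ((t - 1) * 5 ^ m),
      (cfun s(x, y)).val = GRAux.colD m (x.val / (t - 1)) (y.val / (t - 1)) := by
    intro x y
    simp [hcdef]
  refine ⟨cfun, ?_, ?_⟩
  · rintro ⟨u, v, w, -, -, -, h1, h2, h3⟩
    set d := u.val / (t - 1) with hdd
    set e := v.val / (t - 1) with hee
    set f := w.val / (t - 1) with hff
    have hd := hq u
    have he := hq v
    have hf := hq w
    have n1 : GRAux.colD m d e ≠ GRAux.colD m d f := fun h => h1 (Fin.ext (by rw [hc, hc, h]))
    have n2 : GRAux.colD m d e ≠ GRAux.colD m e f := fun h => h2 (Fin.ext (by rw [hc, hc, h]))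
    have n3 : GRAux.colD m d f ≠ GRAux.colD m e f := fun h => h3 (Fin.ext (by rw [hc, hc, h]))
    have hde : d ≠ e := fun h => n3 (by rw [h])
    have hdf : d ≠ f := fun h => n2 (by rw [h, GRAux.colD_symm m f e])
    have hef : e ≠ f := fun h => n1 (by rw [h])
    set J1 := GRAux.levD m d e with hJ1
    set J2 := GRAux.levD m d f with hJ2
    set J3 := GRAux.levD m e f with hJ3
    have i1 : J1 ≤ max J2 J3 := GRAux.levD_max hde hd he hf
    have i2 : J2 ≤ max J1 J3 := by
      have := GRAux.levD_max hdf hd hf he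
      rwa [GRAux.levD_symm m f e] at this
    have i3 : J3 ≤ max J1 J2 := by
      have := GRAux.levD_max hef he hf hd
      rwa [GRAux.levD_symm m e d, GRAux.levD_symm m f d] at this
    have o1 : GRAux.colD m d e = 2 * J1 ∨ GRAux.colD m d e = 2 * J1 + 1 := by
      rcases GRAux.colD_spec hde hd he with ⟨h, -⟩ | ⟨h, -⟩
      · exact Or.inl h
      · exact Or.inr h
    have o2 : GRAux.colD m d f = 2 * J2 ∨ GRAux.colD m d f = 2 * J2 + 1 := by
      rcases GRAux.colD_spec hdf hd hf with ⟨h, -⟩ | ⟨h, -⟩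
      · exact Or.inl h
      · exact Or.inr h
    have o3 : GRAux.colD m e f = 2 * J3 ∨ GRAux.colD m e f = 2 * J3 + 1 := by
      rcases GRAux.colD_spec hef he hf with ⟨h, -⟩ | ⟨h, -⟩
      · exact Or.inl h
      · exact Or.inr h
    have hcases : (J1 = J2 ∧ J3 ≤ J1) ∨ (J1 = J3 ∧ J2 ≤ J1) ∨ (J2 = J3 ∧ J1 ≤ J2) := by
      omega
    rcases hcases with ⟨hJ, hle⟩ | ⟨hJ, hle⟩ | ⟨hJ, hle⟩
    · rcases eq_or_lt_of_le hle with heq | hlt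
      · omega
      · exact n1 (GRAux.colD_eq_of_agree hde hdf hJ.symm (GRAux.levD_agree he hf hlt))
    · rcases eq_or_lt_of_le hle with heq | hlt
      · omega
      · apply n2
        rw [GRAux.colD_symm m d e]
        apply GRAux.colD_eq_of_agree (Ne.symm hde) hef
        · rw [GRAux.levD_symm m e d, ← hJ1, ← hJ3, hJ]
        · rw [GRAux.levD_symm m e d, ← hJ1]
          exact GRAux.levD_agree hd hf hlt
    · rcases eq_or_lt_of_le hle with heq | hlt
      · omega
      · apply n3
        rw [GRAux.colD_symm m d f, GRAux.colD_symm m e f]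
        apply GRAux.colD_eq_of_agree (Ne.symm hdf) (Ne.symm hef)
        · rw [GRAux.levD_symm m f e, ← hJ3, GRAux.levD_symm m f d, ← hJ2]
          exact hJ.symm
        · rw [GRAux.levD_symm m f d, ← hJ2]
          exact GRAux.levD_agree hd he hlt

  · rintro ⟨col, F, hinj, hedge⟩
    have hcol : col.val < 2 * m + 1 := hkm ▸ col.isLt
    have hAdj : ∀ (a b : ℕ) (ha : a < t) (hb : b < t), (b = a + 1 ∨ (a = 0 ∧ b = 2)) →
        (pathPlus t).Adj ⟨a, ha⟩ ⟨b, hb⟩ := by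
      intro a b ha hb h
      rw [pathPlus, SimpleGraph.fromRel_adj]
      refine ⟨Fin.ne_of_val_ne ?_, Or.inl (by simpa using h)⟩
      show a ≠ b
      omega
    have hE : ∀ a b : Fin t, (pathPlus t).Adj a b →
        GRAux.colD m ((F a).val / (t - 1)) ((F b).val / (t - 1)) = col.val := by
      intro a b hab
      rw [← hc (F a) (F b), hedge a b hab]
    rcases eq_or_ne col.val (2 * m) with hbase | hnb
    · -- base color: all vertices in one block of size t-1
      have hQc : ∀ a b : Fin t, (pathPlus t).Adj a b →
          (F a).val / (t - 1) = (F b).val / (t - 1) := by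
        intro a b hab
        exact GRAux.colD_base (hq _) (hq _) (by rw [hE a b hab, hbase])
      have h0t : 0 < t := by omega
      have hall : ∀ i (hi : i < t), (F ⟨i, hi⟩).val / (t - 1) = (F ⟨0, h0t⟩).val / (t - 1) := by
        intro i
        induction i with
        | zero => intro hi; rfl
        | succ n ih =>
          intro hi
          have hn : n < t := by omega
          have hstep := hQc ⟨n, hn⟩ ⟨n + 1, hi⟩ (hAdj n (n + 1) hn hi (Or.inl rfl))
          rw [← hstep]
          exact ih hn
      have hGinj : Function.Injective
          (fun i : Fin t => (⟨(F i).val % (t - 1), Nat.mod_lt _ ht1⟩ : Fin (t - 1))) := by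
        intro i j hij
        simp only [Fin.mk.injEq] at hij
        have hqi : (F i).val / (t - 1) = (F j).val / (t - 1) := by
          have h1 := hall i.val i.isLt
          have h2 := hall j.val j.isLt
          simpa using h1.trans h2.symm
        apply hinj
        apply Fin.ext
        have e1 : (t - 1) * ((F i).val / (t - 1)) + (F i).val % (t - 1) = (F i).val :=
          Nat.div_add_mod _ _
        rw [← e1, hqi, hij]
        exact Nat.div_add_mod _ _
      have := Fintype.card_le_of_injective _ hGinj
      simp only [Fintype.card_fin] at this
      omega
    · -- non-base color: monochromatic triangle in a pentagon-type color
      have hcol2 : col.val < 2 * m := by omega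
      have h0 : (0 : ℕ) < t := by omega
      have h1 : (1 : ℕ) < t := by omega
      have h2 : (2 : ℕ) < t := by omega
      set x := ((F ⟨0, h0⟩).val / (t - 1)) with hx
      set y := ((F ⟨1, h1⟩).val / (t - 1)) with hy
      set z := ((F ⟨2, h2⟩).val / (t - 1)) with hz
      have hdx := hq (F ⟨0, h0⟩)
      have hdy := hq (F ⟨1, h1⟩)
      have hdz := hq (F ⟨2, h2⟩)
      have c1 : GRAux.colD m x y = col.val :=
        hE ⟨0, h0⟩ ⟨1, h1⟩ (hAdj 0 1 h0 h1 (Or.inl rfl))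
      have c2 : GRAux.colD m y z = col.val :=
        hE ⟨1, h1⟩ ⟨2, h2⟩ (hAdj 1 2 h1 h2 (Or.inl rfl))
      have c3 : GRAux.colD m x z = col.val :=
        hE ⟨0, h0⟩ ⟨2, h2⟩ (hAdj 0 2 h0 h2 (Or.inr ⟨rfl, rfl⟩))
      have hne1 : x ≠ y := by
        intro h; rw [h, GRAux.colD_diag] at c1; omega
      have hne2 : y ≠ z := by
        intro h; rw [h, GRAux.colD_diag] at c2; omega
      have hne3 : x ≠ z := by
        intro h; rw [h, GRAux.colD_diag] at c3; omega
      have s1 := GRAux.colD_spec hne1 hdx hdy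
      have s2 := GRAux.colD_spec hne2 hdy hdz
      have s3 := GRAux.colD_spec hne3 hdx hdz
      set L1 := GRAux.levD m x y with hL1
      set L2 := GRAux.levD m y z with hL2
      set L3 := GRAux.levD m x z with hL3
      rcases s1 with ⟨e1, p1⟩ | ⟨e1, p1⟩ <;> rcases s2 with ⟨e2, p2⟩ | ⟨e2, p2⟩ <;>
        rcases s3 with ⟨e3, p3⟩ | ⟨e3, p3⟩
      · have hL12 : L2 = L1 := by omega
        have hL13 : L3 = L1 := by omega
        rw [hL12] at p2
        rw [hL13] at p3
        exact GRAux.pent_add1 _ _ _ p1 p2 p3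
      · omega
      · omega
      · omega
      · omega
      · omega
      · omega
      · have hL12 : L2 = L1 := by omega
        have hL13 : L3 = L1 := by omega
        rw [hL12] at p2
        rw [hL13] at p3
        exact GRAux.pent_add2 _ _ _ p1 p2 p3
end

section
/- Let t ≥ 3 and let the edges of a complete graph be colored so that the coloring contains no monochromatic copy of S_t^+ in the color red. Suppose H'_1, H'_2, …, H'_{m'} are pairwise disjoint nonempty vertex sets, each of size at most t − 2, such that every edge between two distinct sets H'_i and H'_j is red. Then |H'_1| + |H'_2| + ⋯ + |H'_{m'}| ≤ 2t − 4. -/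
open SimpleGraph

/-- If a coloring of the edges of a complete graph has no red copy of `S_t^+` (`t ≥ 3`),
and `H' 0, …, H' (m-1)` are pairwise disjoint nonempty vertex sets, each of size at most
`t - 2`, with all edges between distinct sets red, then the total number of vertices in
these sets is at most `2t - 4`. -/
theorem claim_allSmall {V : Type*} [DecidableEq V] {C : Type*} (t : ℕ) (ht : 3 ≤ t)
    (c : Sym2 V → C) (red : C)
    (hnored : ¬ HasCopyIn c red (starPlus t))
    (m : ℕ) (H' : Fin m → Finset V)
    (hne : ∀ i, (H' i).Nonempty)
    (hcard : ∀ i, (H' i).card ≤ t - 2)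
    (hdisj : ∀ i j, i ≠ j → Disjoint (H' i) (H' j))
    (hredE : ∀ i j, i ≠ j → ∀ u ∈ H' i, ∀ v ∈ H' j, c s(u, v) = red) :
    ∑ i, (H' i).card ≤ 2 * t - 4 := by
  by_contra hS
  push_neg at hS
  have hm : 0 < m := by
    rcases Nat.eq_zero_or_pos m with h | h
    · subst h; simp at hS
    · exact h
  set i0 : Fin m := ⟨0, hm⟩ with hi0
  obtain ⟨u, hu⟩ := hne i0
  set U : Finset V := (Finset.univ.erase i0).biUnion H' with hUdef
  have hUcard : U.card = ∑ j ∈ Finset.univ.erase i0, (H' j).card := by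
    apply Finset.card_biUnion
    intro x _ y _ hxy
    exact hdisj x y hxy
  have hsum : (H' i0).card + ∑ j ∈ Finset.univ.erase i0, (H' j).card
      = ∑ i, (H' i).card :=
    Finset.add_sum_erase Finset.univ (fun i => (H' i).card) (Finset.mem_univ i0)
  have hU : t - 1 ≤ U.card := by
    have h0 := hcard i0
    omega
  have hmemU : ∀ x ∈ U, ∃ j, j ≠ i0 ∧ x ∈ H' j := by
    intro x hx
    obtain ⟨j, hj, hxj⟩ := Finset.mem_biUnion.mp hx
    exact ⟨j, (Finset.mem_erase.mp hj).1, hxj⟩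
  have hredu : ∀ x ∈ U, c s(u, x) = red := by
    intro x hx
    obtain ⟨j, hj, hxj⟩ := hmemU x hx
    exact hredE i0 j (Ne.symm hj) u hu x hxj
  have hnotu : ∀ x ∈ U, x ≠ u := by
    intro x hx hxu
    obtain ⟨j, hj, hxj⟩ := hmemU x hx
    exact (Finset.disjoint_left.mp (hdisj i0 j (Ne.symm hj)) hu) (hxu ▸ hxj)
  obtain ⟨v, hvU⟩ : U.Nonempty := Finset.card_pos.mp (by omega)
  obtain ⟨j, hj0, hvj⟩ := hmemU v hvU
  obtain ⟨w, hwmem⟩ : (U \ H' j).Nonempty := by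
    apply Finset.card_pos.mp
    have := Finset.le_card_sdiff (H' j) U
    have := hcard j
    omega
  obtain ⟨hwU, hwj⟩ := Finset.mem_sdiff.mp hwmem
  obtain ⟨k, hk0, hwk⟩ := hmemU w hwU
  have hjk : j ≠ k := fun h => hwj (h ▸ hwk)
  have hvw : v ≠ w := fun h => hwj (h ▸ hvj)
  have hredvw : c s(v, w) = red := hredE j k hjk v hvj w hwk
  obtain ⟨T, hTsub, hTcard⟩ : ∃ T ⊆ U \ {v, w}, T.card = t - 3 := by
    apply Finset.exists_subset_card_eq
    have h2 : ({v, w} : Finset V).card ≤ 2 := Finset.card_insert_le _ _ |>.trans (by simp)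
    have := Finset.le_card_sdiff ({v, w} : Finset V) U
    omega
  have e := T.equivFinOfCardEq hTcard
  set g : Fin (t - 3) → V := fun i => (e.symm i : V) with hg
  have hginj : Function.Injective g := fun i i' h =>
    e.symm.injective (Subtype.ext h)
  have hgmem : ∀ i, g i ∈ U \ {v, w} := fun i => hTsub (e.symm i).2
  have hgU : ∀ i, g i ∈ U := fun i => (Finset.mem_sdiff.mp (hgmem i)).1
  have hgvw : ∀ i, g i ≠ v ∧ g i ≠ w := by
    intro i
    have := (Finset.mem_sdiff.mp (hgmem i)).2
    simp only [Finset.mem_insert, Finset.mem_singleton] at this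
    exact ⟨fun h => this (Or.inl h), fun h => this (Or.inr h)⟩
  have hvu : v ≠ u := hnotu v hvU
  have hwu : w ≠ u := hnotu w hwU
  set f : Fin t → V := fun a =>
    if h0 : a.val = 0 then u else if h1 : a.val = 1 then v else if h2 : a.val = 2 then w
    else g ⟨a.val - 3, by have := a.2; omega⟩ with hf
  have hfU : ∀ a : Fin t, a.val ≠ 0 → f a ∈ U := by
    intro a ha
    simp only [hf]
    rw [dif_neg ha]
    split_ifs with h1 h2
    · exact hvU
    · exact hwU
    · exact hgU _
  apply hnored
  refine ⟨f, ?_, ?_⟩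
  · intro a b hab
    have hgu : ∀ i, g i ≠ u := fun i => hnotu _ (hgU i)
    simp only [hf] at hab
    split_ifs at hab with h1 h2 h3 h4 h5 h6 h7 h8 h9 h10 h11 h12 h13 h14 h15 <;>
      first
      | (exact Fin.ext (by omega))
      | (exact absurd hab hvu.symm)
      | (exact absurd hab hwu.symm)
      | (exact absurd hab (hgu _).symm)
      | (exact absurd hab hvu)
      | (exact absurd hab hwu)
      | (exact absurd hab (hgu _))
      | (exact absurd hab hvw)
      | (exact absurd hab hvw.symm)
      | (exact absurd hab (hgvw _).1.symm)
      | (exact absurd hab (hgvw _).2.symm)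
      | (exact absurd hab (hgvw _).1)
      | (exact absurd hab (hgvw _).2)
      | (have := hginj hab; have := Fin.mk.injEq _ _ _ _ ▸ this;
         exact Fin.ext (by omega))
  · intro a b hadj
    rw [starPlus, SimpleGraph.fromRel_adj] at hadj
    obtain ⟨hab, hcase⟩ := hadj
    have hfa0 : a.val = 0 → f a = u := by intro h; simp [hf, h]
    have hfb0 : b.val = 0 → f b = u := by intro h; simp [hf, h]
    have hf1 : ∀ x : Fin t, x.val = 1 → f x = v := by
      intro x h; simp [hf, h]
    have hf2 : ∀ x : Fin t, x.val = 2 → f x = w := by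
      intro x h; simp [hf, h]
    rcases hcase with (h | ⟨h1, h2⟩) | (h | ⟨h1, h2⟩)
    · rw [hfa0 h]
      exact hredu _ (hfU b (fun hb => hab (Fin.ext (by omega))))
    · rw [hf1 a h1, hf2 b h2]; exact hredvw
    · rw [hfb0 h, Sym2.eq_swap]
      exact hredu _ (hfU a (fun ha => hab (Fin.ext (by omega))))
    · rw [hf1 b h1, hf2 a h2, Sym2.eq_swap]; exact hredvw
end

section
/- Let t ≥ 3 and let the edges of a complete graph be colored with red and blue among other possible colors. Suppose H_1 and H_2 are disjoint vertex sets, each of size at least t − 1, such that all edges between H_1 and H_2 are blue, and suppose H_3 and H_4 are two disjoint nonempty vertex sets, disjoint from H_1 ∪ H_2, such that all edges from H_3 to H_1 and from H_4 to H_1 are red, all edges from H_3 to H_2 and from H_4 to H_2 are blue, and all edges between H_3 and H_4 have a single common color. Then the coloring contains a monochromatic copy of S_t^+ (a red copy if the edges between H_3 and H_4 are red, and a blue copy if they are blue). -/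
open SimpleGraph

lemma starPlus_of_center_leaf_set {V : Type*} [DecidableEq V] {C : Type*} (t : ℕ) (ht : 3 ≤ t)
    (c : Sym2 V → C) (col : C) (u v : V) (H : Finset V)
    (huv : u ≠ v) (hu : u ∉ H) (hv : v ∉ H)
    (hcard : t - 2 ≤ H.card)
    (cuv : c s(u, v) = col)
    (cuH : ∀ w ∈ H, c s(u, w) = col)
    (cvH : ∀ w ∈ H, c s(v, w) = col) :
    HasCopyIn c col (starPlus t) := by
  obtain ⟨s, hsH, hscard⟩ := Finset.exists_subset_card_eq hcard
  have e := s.equivFin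
  set g : Fin (t - 2) → V := fun i => (e.symm (Fin.cast hscard.symm i) : V) with hg
  have hgmem : ∀ i, g i ∈ H := fun i => hsH (e.symm (Fin.cast hscard.symm i)).2
  have hginj : Function.Injective g := by
    intro i j hij
    have := Subtype.ext hij
    simpa [Fin.ext_iff] using e.symm.injective this
  set f : Fin t → V := fun a =>
    if a.val = 0 then u else if a.val = 1 then v else g ⟨a.val - 2, by omega⟩ with hf
  refine ⟨f, ?_, ?_⟩
  · intro a b hab
    simp only [hf] at hab
    split_ifs at hab <;>
      first
      | (apply Fin.ext; omega)
      | exact absurd hab huv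
      | exact absurd hab.symm huv
      | exact absurd (by rw [hab]; exact hgmem _) hu
      | exact absurd (by rw [← hab]; exact hgmem _) hu
      | exact absurd (by rw [hab]; exact hgmem _) hv
      | exact absurd (by rw [← hab]; exact hgmem _) hv
      | (have := hginj hab; apply Fin.ext; simp only [Fin.mk.injEq] at this; omega)
  · intro a b hadj
    rw [starPlus, SimpleGraph.fromRel_adj] at hadj
    obtain ⟨hne, hr⟩ := hadj
    have hne' : a.val ≠ b.val := fun h => hne (Fin.ext h)
    have key : ∀ x y : Fin t, x.val ≠ y.val →
        (x.val = 0 ∨ (x.val = 1 ∧ y.val = 2)) → c s(f x, f y) = col := by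
      intro x y hxy hxy2
      rcases hxy2 with hx0 | ⟨hx1, hy2⟩
      · by_cases hy1 : y.val = 1
        · simpa [hf, hx0, hy1] using cuv
        · have hy0 : y.val ≠ 0 := by omega
          simpa [hf, hx0, hy0, hy1] using cuH _ (hgmem _)
      · simpa [hf, hx1, hy2] using cvH _ (hgmem _)
    rcases hr with h | h
    · exact key a b hne' h
    · rw [Sym2.eq_swap]; exact key b a hne'.symm h

/-- If `H1, H2` are disjoint vertex sets of size at least `t - 1` with all blue edges in
between, and `H3, H4` are disjoint nonempty vertex sets (disjoint from `H1 ∪ H2`) with all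
red edges to `H1`, all blue edges to `H2`, and a single common color `col ∈ {red, blue}` on
all edges between `H3` and `H4`, then there is a copy of `S_t^+` in color `col`. -/
theorem claim_differentColors {V : Type*} [DecidableEq V] {C : Type*} (t : ℕ) (ht : 3 ≤ t)
    (c : Sym2 V → C) (red blue : C)
    (H1 H2 H3 H4 : Finset V)
    (h12 : Disjoint H1 H2) (h13 : Disjoint H1 H3) (h14 : Disjoint H1 H4)
    (h23 : Disjoint H2 H3) (h24 : Disjoint H2 H4) (h34 : Disjoint H3 H4)
    (hc1 : t - 1 ≤ H1.card) (hc2 : t - 1 ≤ H2.card)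
    (hne3 : H3.Nonempty) (hne4 : H4.Nonempty)
    (hb12 : ∀ u ∈ H1, ∀ v ∈ H2, c s(u, v) = blue)
    (hr31 : ∀ u ∈ H3, ∀ v ∈ H1, c s(u, v) = red)
    (hr41 : ∀ u ∈ H4, ∀ v ∈ H1, c s(u, v) = red)
    (hb32 : ∀ u ∈ H3, ∀ v ∈ H2, c s(u, v) = blue)
    (hb42 : ∀ u ∈ H4, ∀ v ∈ H2, c s(u, v) = blue)
    (col : C) (hcol : col = red ∨ col = blue)
    (h34c : ∀ u ∈ H3, ∀ v ∈ H4, c s(u, v) = col) :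
    HasCopyIn c col (starPlus t) := by
  obtain ⟨u, hu3⟩ := hne3
  obtain ⟨v, hv4⟩ := hne4
  have huv : u ≠ v := fun h => (Finset.disjoint_right.mp h34 hv4) (h ▸ hu3)
  rcases hcol with hcol | hcol
  · refine starPlus_of_center_leaf_set t ht c col u v H1 huv
      (fun h => (Finset.disjoint_right.mp h13 hu3) h)
      (fun h => (Finset.disjoint_right.mp h14 hv4) h)
      (by omega) (h34c u hu3 v hv4)
      (fun w hw => hcol ▸ hr31 u hu3 w hw)
      (fun w hw => hcol ▸ hr41 v hv4 w hw)
  · refine starPlus_of_center_leaf_set t ht c col u v H2 huv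
      (fun h => (Finset.disjoint_right.mp h23 hu3) h)
      (fun h => (Finset.disjoint_right.mp h24 hv4) h)
      (by omega) (h34c u hu3 v hv4)
      (fun w hw => hcol ▸ hb32 u hu3 w hw)
      (fun w hw => hcol ▸ hb42 v hv4 w hw)
end

section
/- Let t ≥ 5 be odd and consider a red/blue coloring of the edges of a complete graph containing a red cycle C = v_1v_2⋯v_tv_1 on t vertices such that the coloring contains no red copy of P_t^+. Then every chord of the form v_iv_{i+2} (indices modulo t) is blue, and these chords form a blue cycle of length t; moreover, if there is at least one vertex outside C, then the coloring contains a blue copy of P_t^+. -/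
open SimpleGraph

/-- Index rotation: the natural number `i` reduced modulo `t`, as an element of `Fin t`. -/
def finRot (t : ℕ) (ht : 0 < t) (i : ℕ) : Fin t := ⟨i % t, Nat.mod_lt _ ht⟩


section AuxRedBlue

private lemma fin2_cases' (x : Fin 2) : x = 0 ∨ x = 1 := by fin_cases x <;> simp

private lemma finRot_congr {t : ℕ} (ht : 0 < t) {a b : ℕ} (h : a % t = b % t) :
    finRot t ht a = finRot t ht b := Fin.ext h

private lemma finRot_cancel {t : ℕ} (ht : 0 < t) {j e1 e2 : ℕ} (h1 : e1 < t) (h2 : e2 < t)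
    (h : finRot t ht (j + e1) = finRot t ht (j + e2)) : e1 = e2 := by
  have hval : (j + e1) % t = (j + e2) % t := congrArg Fin.val h
  have h2' := Nat.ModEq.add_left_cancel' j hval
  rw [Nat.ModEq, Nat.mod_eq_of_lt h1, Nat.mod_eq_of_lt h2] at h2'
  exact h2'

private lemma finRot_cancel_two {t : ℕ} (ht : 0 < t) (hodd : Odd t) {j e1 e2 : ℕ}
    (h1 : e1 < t) (h2 : e2 < t)
    (h : finRot t ht (j + 2 * e1) = finRot t ht (j + 2 * e2)) : e1 = e2 := by
  have hval : (j + 2 * e1) % t = (j + 2 * e2) % t := congrArg Fin.val h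
  have h2' := Nat.ModEq.add_left_cancel' j hval
  have hco : Nat.gcd t 2 = 1 := Nat.coprime_two_right.2 hodd
  have h3 := Nat.ModEq.cancel_left_of_coprime hco h2'
  rw [Nat.ModEq, Nat.mod_eq_of_lt h1, Nat.mod_eq_of_lt h2] at h3
  exact h3

/-- If a chord `v i, v (i+2)` were red, rotating the cycle would give a red `P_t^+`. -/
private lemma chord_blue {V : Type*} {t : ℕ} (ht : 5 ≤ t) (ht0 : 0 < t)
    (c : Sym2 V → Fin 2) (v : Fin t → V) (hv : Function.Injective v)
    (hcyc : ∀ i : ℕ, c s(v (finRot t ht0 i), v (finRot t ht0 (i + 1))) = 0)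
    (hnored : ¬ HasCopyIn c 0 (pathPlus t)) (i : ℕ) :
    c s(v (finRot t ht0 i), v (finRot t ht0 (i + 2))) = 1 := by
  rcases fin2_cases' (c s(v (finRot t ht0 i), v (finRot t ht0 (i + 2)))) with hred | h
  · exfalso; apply hnored
    refine ⟨fun k => v (finRot t ht0 (i + k.val)), ?_, ?_⟩
    · intro a b h
      exact Fin.ext (finRot_cancel ht0 a.isLt b.isLt (hv h))
    · have key : ∀ a b : Fin t, (b.val = a.val + 1 ∨ (a.val = 0 ∧ b.val = 2)) →
          c s(v (finRot t ht0 (i + a.val)), v (finRot t ht0 (i + b.val))) = 0 := by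
        rintro a b (hab | ⟨ha, hb⟩)
        · rw [hab, ← add_assoc]; exact hcyc (i + a.val)
        · rw [ha, hb]
          simpa using hred
      intro a b hadj
      rw [pathPlus, fromRel_adj] at hadj
      rcases hadj.2 with h' | h'
      · exact key a b h'
      · rw [Sym2.eq_swap]; exact key b a h'
  · exact h

/-- A vertex outside the red cycle cannot have red edges to two consecutive cycle
vertices: this would give a red `P_t^+` with triangle `v j, w, v (j+1)`. -/
private lemma no_red_consec {V : Type*} {t : ℕ} (ht : 5 ≤ t) (ht0 : 0 < t)
    (c : Sym2 V → Fin 2) (v : Fin t → V) (hv : Function.Injective v)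
    (hcyc : ∀ i : ℕ, c s(v (finRot t ht0 i), v (finRot t ht0 (i + 1))) = 0)
    (hnored : ¬ HasCopyIn c 0 (pathPlus t))
    (w : V) (hw : w ∉ Set.range v) (j : ℕ)
    (h1 : c s(w, v (finRot t ht0 j)) = 0)
    (h2 : c s(w, v (finRot t ht0 (j + 1))) = 0) : False := by
  apply hnored
  set f : Fin t → V := fun k =>
    if k.val = 0 then v (finRot t ht0 j)
    else if k.val = 1 then w
    else v (finRot t ht0 (j + (k.val - 1))) with hf
  have f0 : ∀ k : Fin t, k.val = 0 → f k = v (finRot t ht0 j) := by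
    intro k hk; simp [hf, hk]
  have f1 : ∀ k : Fin t, k.val = 1 → f k = w := by
    intro k hk; simp [hf, hk]
  have f2 : ∀ k : Fin t, k.val ≠ 0 → k.val ≠ 1 → f k = v (finRot t ht0 (j + (k.val - 1))) := by
    intro k hk0 hk1; simp [hf, hk0, hk1]
  refine ⟨f, ?_, ?_⟩
  · intro a b hab
    by_cases ha0 : a.val = 0 <;> by_cases hb0 : b.val = 0
    · exact Fin.ext (ha0.trans hb0.symm)
    · by_cases hb1 : b.val = 1
      · rw [f0 a ha0, f1 b hb1] at hab
        exact absurd ⟨_, hab⟩ hw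
      · rw [f0 a ha0, f2 b hb0 hb1] at hab
        have : finRot t ht0 (j + 0) = finRot t ht0 (j + (b.val - 1)) := by
          simpa using hv hab
        have := finRot_cancel ht0 (by omega) (by omega : b.val - 1 < t) this
        omega
    · by_cases ha1 : a.val = 1
      · rw [f1 a ha1, f0 b hb0] at hab
        exact absurd ⟨_, hab.symm⟩ hw
      · rw [f2 a ha0 ha1, f0 b hb0] at hab
        have : finRot t ht0 (j + (a.val - 1)) = finRot t ht0 (j + 0) := by
          simpa using hv hab
        have := finRot_cancel ht0 (by omega : a.val - 1 < t) (by omega) this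
        omega
    · by_cases ha1 : a.val = 1 <;> by_cases hb1 : b.val = 1
      · exact Fin.ext (ha1.trans hb1.symm)
      · rw [f1 a ha1, f2 b hb0 hb1] at hab
        exact absurd ⟨_, hab.symm⟩ hw
      · rw [f2 a ha0 ha1, f1 b hb1] at hab
        exact absurd ⟨_, hab⟩ hw
      · rw [f2 a ha0 ha1, f2 b hb0 hb1] at hab
        have := finRot_cancel ht0 (by omega : a.val - 1 < t) (by omega : b.val - 1 < t) (hv hab)
        exact Fin.ext (by omega)
  · have key : ∀ a b : Fin t, (b.val = a.val + 1 ∨ (a.val = 0 ∧ b.val = 2)) →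
        c s(f a, f b) = 0 := by
      rintro a b (hab | ⟨ha, hb⟩)
      · by_cases ha0 : a.val = 0
        · rw [f0 a ha0, f1 b (by omega)]
          rw [Sym2.eq_swap]; exact h1
        · by_cases ha1 : a.val = 1
          · rw [f1 a ha1, f2 b (by omega) (by omega)]
            have : b.val - 1 = 1 := by omega
            rw [this]; exact h2
          · rw [f2 a ha0 ha1, f2 b (by omega) (by omega)]
            have e1 : j + (b.val - 1) = (j + (a.val - 1)) + 1 := by omega
            rw [e1]; exact hcyc (j + (a.val - 1))
      · rw [f0 a ha, f2 b (by omega) (by omega)]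
        have : b.val - 1 = 1 := by omega
        rw [this]; exact hcyc j
    intro a b hadj
    rw [pathPlus, fromRel_adj] at hadj
    rcases hadj.2 with h' | h'
    · exact key a b h'
    · rw [Sym2.eq_swap]; exact key b a h'

end AuxRedBlue

/-- Let `t ≥ 5` be odd and consider a red/blue (`0`/`1`) coloring of the edges of a complete
graph containing a red cycle `v 0, v 1, …, v (t-1), v 0` such that there is no red copy of
`P_t^+`.  Then every chord `v i, v (i+2)` (indices mod `t`) is blue, these chords form a
single blue cycle of length `t` (traversed as `v 0, v 2, v 4, …`), and if some vertex lies
outside the cycle then there is a blue copy of `P_t^+`. -/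

theorem red_cycle_blue_chords {V : Type*} (t : ℕ) (ht : 5 ≤ t) (hodd : Odd t)
    (c : Sym2 V → Fin 2) (v : Fin t → V) (hv : Function.Injective v)
    (hcyc : ∀ i : ℕ,
      c s(v (finRot t (by omega) i), v (finRot t (by omega) (i + 1))) = 0)
    (hnored : ¬ HasCopyIn c 0 (pathPlus t)) :
    (∀ i : ℕ,
      c s(v (finRot t (by omega) i), v (finRot t (by omega) (i + 2))) = 1) ∧
    Function.Injective (fun i : Fin t => v (finRot t (by omega) (2 * i.val))) ∧
    ((∃ w : V, w ∉ Set.range v) → HasCopyIn c 1 (pathPlus t)) := by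
  have ht0 : 0 < t := by omega
  have hchord := chord_blue ht ht0 c v hv hcyc hnored
  refine ⟨hchord, ?_, ?_⟩
  · intro a b hab
    have ha := finRot_cancel_two ht0 hodd (j := 0) a.isLt b.isLt
      (by simpa using hv hab)
    exact Fin.ext ha
  · rintro ⟨w, hw⟩
    -- find `j` such that both `w v j` and `w v (j+2)` are blue
    have hblue : ∃ j : ℕ, c s(w, v (finRot t ht0 j)) = 1 ∧
        c s(w, v (finRot t ht0 (j + 2))) = 1 := by
      by_contra hcon
      push_neg at hcon
      have hdis : ∀ j : ℕ, c s(w, v (finRot t ht0 j)) = 0 ∨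
          c s(w, v (finRot t ht0 (j + 2))) = 0 := by
        intro j
        rcases fin2_cases' (c s(w, v (finRot t ht0 j))) with h | h
        · exact Or.inl h
        rcases fin2_cases' (c s(w, v (finRot t ht0 (j + 2)))) with h' | h'
        · exact Or.inr h'
        · exact absurd h' (hcon j h)
      obtain ⟨j0, hj0⟩ : ∃ j0 : ℕ, c s(w, v (finRot t ht0 j0)) = 0 := by
        rcases hdis 0 with h | h
        exacts [⟨0, h⟩, ⟨2, h⟩]
      rcases hdis (j0 + t - 1) with h | h
      · refine no_red_consec ht ht0 c v hv hcyc hnored w hw (j0 + t - 1) h ?_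
        have e : (j0 + t - 1 + 1) % t = j0 % t := by
          have : j0 + t - 1 + 1 = j0 + t := by omega
          rw [this, Nat.add_mod_right]
        rw [finRot_congr ht0 e]; exact hj0
      · refine no_red_consec ht ht0 c v hv hcyc hnored w hw j0 hj0 ?_
        have e : (j0 + t - 1 + 2) % t = (j0 + 1) % t := by
          have : j0 + t - 1 + 2 = (j0 + 1) + t := by omega
          rw [this, Nat.add_mod_right]
        rw [← finRot_congr ht0 e]; exact h
    obtain ⟨j, hb1, hb2⟩ := hblue
    refine ⟨fun k =>
      if k.val = 0 then w else v (finRot t ht0 (j + 2 * (k.val - 1))), ?_, ?_⟩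
    · intro a b hab
      by_cases ha0 : a.val = 0 <;> by_cases hb0 : b.val = 0
      · exact Fin.ext (ha0.trans hb0.symm)
      · simp only [ha0, if_pos, if_neg hb0] at hab
        exact absurd ⟨_, hab.symm⟩ hw
      · simp only [hb0, if_pos, if_neg ha0] at hab
        exact absurd ⟨_, hab⟩ hw
      · simp only [if_neg ha0, if_neg hb0] at hab
        have := finRot_cancel_two ht0 hodd
          (by omega : a.val - 1 < t) (by omega : b.val - 1 < t) (hv hab)
        exact Fin.ext (by omega)
    · have key : ∀ a b : Fin t, (b.val = a.val + 1 ∨ (a.val = 0 ∧ b.val = 2)) →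
          c s(if a.val = 0 then w else v (finRot t ht0 (j + 2 * (a.val - 1))),
              if b.val = 0 then w else v (finRot t ht0 (j + 2 * (b.val - 1)))) = 1 := by
        rintro a b (hab | ⟨ha, hb⟩)
        · by_cases ha0 : a.val = 0
          · rw [if_pos ha0, if_neg (by omega : ¬ b.val = 0)]
            have : j + 2 * (b.val - 1) = j := by omega
            rw [this]; exact hb1
          · rw [if_neg ha0, if_neg (by omega : ¬ b.val = 0)]
            have e1 : j + 2 * (b.val - 1) = (j + 2 * (a.val - 1)) + 2 := by omega
            rw [e1]; exact hchord (j + 2 * (a.val - 1))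
        · rw [if_pos ha, if_neg (by omega : ¬ b.val = 0)]
          have : j + 2 * (b.val - 1) = j + 2 := by omega
          rw [this]; exact hb2
      intro a b hadj
      rw [pathPlus, fromRel_adj] at hadj
      rcases hadj.2 with h' | h'
      · exact key a b h'
      · rw [Sym2.eq_swap]; exact key b a h'
end

section
/- Let t ≥ 5 and let the edges of a complete graph be colored with red and blue among other possible colors so that the coloring contains no monochromatic copy of P_t^+. Suppose H_1 and H_2 are disjoint vertex sets with |H_1|, |H_2| ≥ ⌈t/2⌉ and all edges between H_1 and H_2 red, and suppose A and B are vertex sets, pairwise disjoint and disjoint from H_1 ∪ H_2, such that all edges from A ∪ B to H_2 are blue, all edges from A to H_1 are red, all edges from B to H_1 are blue, and A ∪ B is partitioned into at least three parts of size at most ⌈t/2⌉ − 1 each with all edges between distinct parts of A ∪ B colored red or blue. Then |A| + |B| ≤ t − 1. -/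
open SimpleGraph

lemma countP_or_disj {α : Type*} (l : List α) (p q : α → Bool) (h : ∀ a, p a = true → q a = false) :
    l.countP (fun a => p a || q a) = l.countP p + l.countP q := by
  induction l with
  | nil => simp
  | cons x xs ih =>
    have := h x
    simp only [List.countP_cons, ih]
    cases hp : p x <;> cases hq : q x <;> simp_all <;> omega

lemma countP_pair_le {α β : Type*} [DecidableEq β] (l : List α) (p : α → β) (b b' : β)
    (hbb : b ≠ b') :
    l.countP (fun a => p a = b) + l.countP (fun a => p a = b') ≤ l.length := by
  rw [← countP_or_disj l _ _ (by intro a ha; simp at ha ⊢; rw [ha]; exact hbb)]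
  exact List.countP_le_length

lemma arrange {α β : Type*} [DecidableEq α] [DecidableEq β] (p : α → β) :
    ∀ (n : ℕ) (l : List α) (ℓ : β), l.length = n →
    (∀ b : β, l.countP (fun a => p a = b) ≤ (n+1)/2) →
    l.countP (fun a => p a = ℓ) ≤ n/2 →
    ∃ l' : List α, l'.Perm l ∧ l'.Chain' (fun a b => p a ≠ p b) ∧
      ∀ x ∈ l'.head?, p x ≠ ℓ := by
  intro n
  induction n with
  | zero =>
    intro l ℓ hlen _ _
    exact ⟨[], by simp [List.length_eq_zero_iff.mp hlen], List.IsChain.nil, by simp⟩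
  | succ n ih =>
    intro l ℓ hlen hall hl
    have hne : ∃ a ∈ l, p a ≠ ℓ := by
      by_contra h
      push_neg at h
      have : l.countP (fun a => p a = ℓ) = l.length :=
        List.countP_eq_length.mpr (by intro a ha; simpa using h a ha)
      omega
    obtain ⟨a0, ha0l, ha0⟩ := hne
    set f : α → ℕ := fun a => l.countP (fun x => p x = p a) with hf
    set S := l.filter (fun a => p a ≠ ℓ) with hSdef
    have hS : a0 ∈ S := List.mem_filter.mpr ⟨ha0l, by simpa using ha0⟩
    have hSne : S ≠ [] := List.ne_nil_of_mem hS
    obtain ⟨x, hx⟩ : ∃ x, S.argmax f = some x := by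
      cases h : S.argmax f with
      | none => exact absurd (List.argmax_eq_none.mp h) hSne
      | some x => exact ⟨x, rfl⟩
    have hxmem : x ∈ S.argmax f := by rw [hx]; rfl
    have hxS : x ∈ S := List.argmax_mem hxmem
    have hxl : x ∈ l := (List.mem_filter.mp hxS).1
    have hxℓ : p x ≠ ℓ := by simpa using (List.mem_filter.mp hxS).2
    have hmax : ∀ y ∈ l, p y ≠ ℓ → f y ≤ f x := by
      intro y hy hyℓ
      exact List.le_of_mem_argmax (List.mem_filter.mpr ⟨hy, by simpa using hyℓ⟩) hxmem
    set l₂ := l.erase x with hl₂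
    have hperm : l.Perm (x :: l₂) := List.perm_cons_erase hxl
    have hlen₂ : l₂.length = n := by
      rw [hl₂, List.length_erase_of_mem hxl, hlen]
      omega
    have hcnt : ∀ q : α → Bool, l.countP q = (if q x then 1 else 0) + l₂.countP q := by
      intro q
      rw [hperm.countP_eq, List.countP_cons]
      omega
    have key2 : ∀ b : β, b ≠ p x → b ≠ ℓ → l.countP (fun a => p a = b) ≤ (n+1)/2 := by
      intro b hbx hbℓ
      by_cases hb0 : l.countP (fun a => p a = b) = 0
      · omega
      · have hpos : 0 < l.countP (fun a => p a = b) := Nat.pos_of_ne_zero hb0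
        obtain ⟨y, hyl, hyb⟩ := List.countP_pos_iff.mp hpos
        have hyb' : p y = b := by simpa using hyb
        have h1 : l.countP (fun a => p a = b) ≤ l.countP (fun a => p a = p x) := by
          have := hmax y hyl (by rw [hyb']; exact hbℓ)
          simpa [hf, hyb'] using this
        have h2 := countP_pair_le l p b (p x) hbx
        omega
    have hall₂ : ∀ b : β, l₂.countP (fun a => p a = b) ≤ (n+1)/2 := by
      intro b
      have hc := hcnt (fun a => decide (p a = b))
      by_cases hbx : b = p x
      · have := hall b
        subst hbx
        simp at hc
        omega
      · by_cases hbℓ : b = ℓ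
        · subst hbℓ
          omega
        · have := key2 b hbx hbℓ
          omega
    have hlx₂ : l₂.countP (fun a => p a = p x) ≤ n/2 := by
      have hc := hcnt (fun a => decide (p a = p x))
      have := hall (p x)
      simp at hc
      omega
    obtain ⟨l₂', hperm', hchain', hhead'⟩ := ih l₂ (p x) hlen₂ hall₂ hlx₂
    refine ⟨x :: l₂', (hperm'.cons x).trans hperm.symm, ?_, ?_⟩
    · exact List.isChain_cons.mpr ⟨fun y hy => (hhead' y hy).symm, hchain'⟩
    · intro y hy
      simp at hy
      subst hy
      exact hxℓ



def itl {α : Type*} : List α → List α → List α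
  | [], ys => ys
  | x :: xs, ys => x :: itl ys xs
termination_by xs ys => xs.length + ys.length
decreasing_by simp; omega

lemma itl_mem {α : Type*} : ∀ (xs ys : List α) (a : α), a ∈ itl xs ys ↔ a ∈ xs ∨ a ∈ ys := by
  intro xs ys
  induction xs, ys using itl.induct with
  | case1 ys => simp [itl]
  | case2 x xs ys ih => intro a; simp [itl, ih]; tauto

lemma itl_nodup {α : Type*} : ∀ (xs ys : List α), xs.Nodup → ys.Nodup →
    (∀ a ∈ xs, a ∉ ys) → (itl xs ys).Nodup := by
  intro xs ys
  induction xs, ys using itl.induct with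
  | case1 ys => simp [itl]
  | case2 x xs ys ih =>
    intro hx hy hd
    simp only [itl, List.nodup_cons]
    constructor
    · rw [itl_mem]
      push_neg
      exact ⟨fun h => hd x (by simp) h, (List.nodup_cons.mp hx).1⟩
    · exact ih hy (List.nodup_cons.mp hx).2 (fun a ha hb => hd a (by simp [hb]) ha)

lemma itl_chain {α : Type*} (R : α → α → Prop) : ∀ (xs ys : List α),
    ys.length ≤ xs.length → xs.length ≤ ys.length + 1 →
    (∀ a ∈ xs, ∀ b ∈ ys, R a b ∧ R b a) → (itl xs ys).Chain' R := by
  intro xs ys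
  induction xs, ys using itl.induct with
  | case1 ys =>
    intro h1 _ _
    simp only [List.length_nil, Nat.le_zero, List.length_eq_zero_iff] at h1
    subst h1
    simp [itl, List.Chain']
  | case2 x xs ys ih =>
    intro h1 h2 hR
    simp only [itl]
    apply List.isChain_cons.mpr
    constructor
    · intro y hy
      cases ys with
      | nil =>
        have : xs = [] := by simpa using h2
        subst this
        simp [itl] at hy
      | cons b bs =>
        simp only [itl, List.head?_cons, Option.mem_def, Option.some.injEq] at hy
        exact hy ▸ (hR x (by simp) b (by simp)).1
    · apply ih
      · simpa using h2
      · simp at h1 ⊢; omega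
      · intro a ha b hb
        exact ((hR b (by simp [hb]) a ha).symm : _)

lemma copy_of_list {V C : Type*} {c : Sym2 V → C} {col : C} {t : ℕ} (ht : 3 ≤ t)
    {L : List V} (hlen : L.length = t) (hnd : L.Nodup)
    (hchain : L.Chain' (fun a b => c s(a, b) = col))
    (h02 : ∀ x y, L.head? = some x → (L.drop 2).head? = some y → c s(x, y) = col) :
    HasCopyIn c col (pathPlus t) := by
  rcases L with _ | ⟨l0, L⟩
  · simp at hlen; omega
  rcases L with _ | ⟨l1, L⟩
  · simp at hlen; omega
  rcases L with _ | ⟨l2, L⟩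
  · simp at hlen; omega
  have h02' : c s(l0, l2) = col := h02 l0 l2 rfl rfl
  set M := l0 :: l1 :: l2 :: L with hM
  refine ⟨fun i => M.get (Fin.cast hlen.symm i), ?_, ?_⟩
  · intro a b hab
    have := List.nodup_iff_injective_get.mp hnd hab
    exact Fin.cast_injective _ (by exact this)
  · intro a b hadj
    rw [pathPlus, SimpleGraph.fromRel_adj] at hadj
    obtain ⟨hne, hrel⟩ := hadj
    have hchain' := List.isChain_iff_getElem.mp hchain
    have hcons : ∀ (i : ℕ) (h : i + 1 < t),
        c s(M.get ⟨i, by omega⟩, M.get ⟨i+1, by omega⟩) = col := by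
      intro i h
      have := hchain' i (by rw [hlen]; omega)
      exact this
    have h02g : c s(M.get ⟨0, by omega⟩, M.get ⟨2, by omega⟩) = col := h02'
    have hb := b.isLt
    have ha := a.isLt
    rcases hrel with (h | h) | (h | h)
    · have : c s(M.get ⟨a.val, by omega⟩, M.get ⟨a.val+1, by omega⟩) = col := hcons a.val (by omega)
      convert this using 4 <;> exact Fin.ext (by simp [h])
    · obtain ⟨h0, h2⟩ := h
      convert h02g using 4 <;> exact Fin.ext (by simp [h0, h2])
    · rw [Sym2.eq_swap]
      have : c s(M.get ⟨b.val, by omega⟩, M.get ⟨b.val+1, by omega⟩) = col := hcons b.val (by omega)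
      convert this using 4 <;> exact Fin.ext (by simp [h])
    · obtain ⟨h0, h2⟩ := h
      rw [Sym2.eq_swap]
      convert h02g using 4 <;> exact Fin.ext (by simp [h0, h2])

lemma itl_length {α : Type*} : ∀ (xs ys : List α), (itl xs ys).length = xs.length + ys.length := by
  intro xs ys
  induction xs, ys using itl.induct with
  | case1 ys => simp [itl]
  | case2 x xs ys ih => simp [itl, ih]; omega

lemma chain'_of_mem {α : Type*} {R S : α → α → Prop} {l : List α}
    (h : ∀ a ∈ l, ∀ b ∈ l, R a b → S a b) (hc : l.Chain' R) : l.Chain' S := by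
  have hc := List.isChain_iff_getElem.mp hc
  apply List.isChain_iff_getElem.mpr
  intro i hi
  exact h _ (List.getElem_mem _) _ (List.getElem_mem _) (hc i hi)

lemma countP_quad_le {α β : Type*} [DecidableEq β] (l : List α) (p : α → β) (b1 b2 b3 b4 : β)
    (h12 : b1 ≠ b2) (h13 : b1 ≠ b3) (h14 : b1 ≠ b4) (h23 : b2 ≠ b3) (h24 : b2 ≠ b4)
    (h34 : b3 ≠ b4) :
    l.countP (fun a => p a = b1) + l.countP (fun a => p a = b2)
      + l.countP (fun a => p a = b3) + l.countP (fun a => p a = b4) ≤ l.length := by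
  induction l with
  | nil => simp
  | cons x xs ih =>
    simp only [List.countP_cons, List.length_cons]
    by_cases e1 : p x = b1 <;> by_cases e2 : p x = b2 <;> by_cases e3 : p x = b3 <;>
      by_cases e4 : p x = b4 <;> simp_all <;> omega

lemma countP_triple_le {α β : Type*} [DecidableEq β] (l : List α) (p : α → β) (b1 b2 b3 : β)
    (h12 : b1 ≠ b2) (h13 : b1 ≠ b3) (h23 : b2 ≠ b3) :
    l.countP (fun a => p a = b1) + l.countP (fun a => p a = b2)
      + l.countP (fun a => p a = b3) ≤ l.length := by
  induction l with
  | nil => simp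
  | cons x xs ih =>
    simp only [List.countP_cons, List.length_cons]
    by_cases e1 : p x = b1 <;> by_cases e2 : p x = b2 <;> by_cases e3 : p x = b3 <;>
      simp_all <;> omega

/-- Case `r = 2`, Claim on `|A| + |B|`: with two large parts `H1, H2` (`|Hi| ≥ ⌈t/2⌉`)
joined by red edges, sets `A` (red to `H1`) and `B` (blue to `H1`), all of `A ∪ B` blue to
`H2`, where `A ∪ B` is partitioned into at least three parts of size at most `⌈t/2⌉ - 1`
with red or blue edges between distinct parts, a coloring with no monochromatic copy of
`P_t^+` forces `|A| + |B| ≤ t - 1`. -/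
theorem claim_pathSumSmall {V : Type*} [DecidableEq V] {C : Type*}
    (t : ℕ) (ht : 5 ≤ t)
    (c : Sym2 V → C) (red blue : C) (hrb : red ≠ blue)
    (H1 H2 A B : Finset V)
    (h12 : Disjoint H1 H2)
    (hA1 : Disjoint A H1) (hA2 : Disjoint A H2)
    (hB1 : Disjoint B H1) (hB2 : Disjoint B H2)
    (hAB : Disjoint A B)
    (hc1 : (t + 1) / 2 ≤ H1.card) (hc2 : (t + 1) / 2 ≤ H2.card)
    (he12 : ∀ u ∈ H1, ∀ v ∈ H2, c s(u, v) = red)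
    (heAB2 : ∀ u ∈ A ∪ B, ∀ v ∈ H2, c s(u, v) = blue)
    (heA1 : ∀ u ∈ A, ∀ v ∈ H1, c s(u, v) = red)
    (heB1 : ∀ u ∈ B, ∀ v ∈ H1, c s(u, v) = blue)
    (m : ℕ) (hm : 3 ≤ m) (P : Fin m → Finset V)
    (hPdisj : ∀ i j, i ≠ j → Disjoint (P i) (P j))
    (hPcard : ∀ i, (P i).card ≤ (t + 1) / 2 - 1)
    (hPunion : Finset.univ.biUnion P = A ∪ B)
    (hPedge : ∀ i j, i ≠ j → ∀ u ∈ P i, ∀ v ∈ P j,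
      c s(u, v) = red ∨ c s(u, v) = blue)
    (hmono : ¬ HasMonoCopy c (pathPlus t)) :
    A.card + B.card ≤ t - 1 := by
  classical
  by_contra hcon
  push_neg at hcon
  set k := (t + 1) / 2 with hk
  have hk3 : 3 ≤ k := by omega
  have hABcard : t ≤ (A ∪ B).card := by
    rw [Finset.card_union_of_disjoint hAB]; omega
  have hdisjABH2 : Disjoint (A ∪ B) H2 := Finset.disjoint_union_left.mpr ⟨hA2, hB2⟩
  have hmemP : ∀ v ∈ A ∪ B, ∃ i, v ∈ P i := by
    intro v hv
    rw [← hPunion] at hv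
    simpa using hv
  have hmInh : Nonempty (Fin m) := ⟨⟨0, by omega⟩⟩
  set pl : V → Fin m := fun v => if h : ∃ i, v ∈ P i then h.choose else hmInh.some with hpldef
  have hpl : ∀ v ∈ A ∪ B, v ∈ P (pl v) := by
    intro v hv
    have h : ∃ i, v ∈ P i := hmemP v hv
    simp only [hpldef, dif_pos h]
    exact h.choose_spec
  have hplu : ∀ v ∈ A ∪ B, ∀ i, v ∈ P i → pl v = i := by
    intro v hv i hvi
    by_contra hne
    exact Finset.disjoint_left.mp (hPdisj _ _ hne) (hpl v hv) hvi
  have hPmemAB : ∀ i, ∀ v ∈ P i, v ∈ A ∪ B := by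
    intro i v hv
    rw [← hPunion]
    exact Finset.mem_biUnion.mpr ⟨i, Finset.mem_univ i, hv⟩
  by_cases hblue : ∃ i j, i ≠ j ∧ ∃ u ∈ P i, ∃ v ∈ P j, c s(u, v) = blue
  · -- blue case
    obtain ⟨i, j, hij, u, hu, v, hv, huv⟩ := hblue
    have huAB : u ∈ A ∪ B := hPmemAB i u hu
    have hvAB : v ∈ A ∪ B := hPmemAB j v hv
    have hune : u ≠ v := fun h => Finset.disjoint_left.mp (hPdisj i j hij) hu (h ▸ hv)
    set W := (A ∪ B) \ {u, v} with hW
    have hWsub : ({u, v} : Finset V) ⊆ A ∪ B := by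
      intro x hx
      simp at hx
      rcases hx with h | h <;> subst h <;> assumption
    have hWcard : t - 2 ≤ W.card := by
      rw [hW, Finset.card_sdiff_of_subset hWsub, Finset.card_pair hune]
      omega
    set hs := H2.toList.take (k - 1) with hhs
    set ws := W.toList.take (t - 1 - k) with hws
    have hhslen : hs.length = k - 1 := by
      rw [hhs, List.length_take, Finset.length_toList]
      omega
    have hwslen : ws.length = t - 1 - k := by
      rw [hws, List.length_take, Finset.length_toList]
      omega
    have hhsmem : ∀ a ∈ hs, a ∈ H2 := by
      intro a ha
      exact Finset.mem_toList.mp ((List.take_sublist _ _).subset ha)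
    have hwsmem : ∀ a ∈ ws, a ∈ W := by
      intro a ha
      exact Finset.mem_toList.mp ((List.take_sublist _ _).subset ha)
    have hhsnd : hs.Nodup := (H2.nodup_toList).sublist (List.take_sublist _ _)
    have hwsnd : ws.Nodup := (W.nodup_toList).sublist (List.take_sublist _ _)
    obtain ⟨h0, hs0, hhs0⟩ : ∃ h0 hs0, hs = h0 :: hs0 := by
      cases hhs' : hs with
      | nil => rw [hhs'] at hhslen; simp at hhslen; omega
      | cons a l => exact ⟨a, l, rfl⟩
    set L := u :: v :: itl hs ws with hL
    have hLlen : L.length = t := by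
      rw [hL]
      simp [itl_length, hhslen, hwslen]
      omega
    have hitlmem : ∀ a ∈ itl hs ws, a ∈ H2 ∨ a ∈ W := by
      intro a ha
      rcases (itl_mem hs ws a).mp ha with h | h
      · exact Or.inl (hhsmem a h)
      · exact Or.inr (hwsmem a h)
    have hLnd : L.Nodup := by
      rw [hL]
      refine List.nodup_cons.mpr ⟨?_, List.nodup_cons.mpr ⟨?_, ?_⟩⟩
      · intro hmem
        simp at hmem
        rcases hmem with h | h
        · exact hune h
        · rcases hitlmem u h with h' | h'
          · exact Finset.disjoint_left.mp hdisjABH2 huAB h'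
          · have := Finset.mem_sdiff.mp (hW ▸ h')
            simp at this
      · intro hmem
        rcases hitlmem v hmem with h' | h'
        · exact Finset.disjoint_left.mp hdisjABH2 hvAB h'
        · have := Finset.mem_sdiff.mp (hW ▸ h')
          simp at this
      · refine itl_nodup hs ws hhsnd hwsnd ?_
        intro a ha hw
        have h1 := hhsmem a ha
        have h2 := (Finset.mem_sdiff.mp (hW ▸ hwsmem a hw)).1
        exact Finset.disjoint_right.mp hdisjABH2 h1 h2
    have hWAB : ∀ a ∈ W, a ∈ A ∪ B := fun a ha => (Finset.mem_sdiff.mp (hW ▸ ha)).1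
    have hchainL : L.Chain' (fun a b => c s(a, b) = blue) := by
      rw [hL]
      refine List.isChain_cons.mpr ⟨?_, List.isChain_cons.mpr ⟨?_, ?_⟩⟩
      · intro y hy
        simp at hy
        subst hy
        exact huv
      · intro y hy
        rw [hhs0] at hy
        simp only [itl, List.head?_cons, Option.mem_def, Option.some.injEq] at hy
        exact hy ▸ heAB2 v hvAB h0 (hhsmem h0 (by rw [hhs0]; simp))
      · refine itl_chain _ hs ws (by omega) (by omega) ?_
        intro a ha b hb
        have haH2 := hhsmem a ha
        have hbAB := hWAB b (hwsmem b hb)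
        constructor
        · rw [Sym2.eq_swap]; exact heAB2 b hbAB a haH2
        · exact heAB2 b hbAB a haH2
    refine hmono ⟨blue, copy_of_list (by omega) hLlen hLnd hchainL ?_⟩
    intro x y hx hy
    rw [hL] at hx hy
    simp only [List.head?_cons, Option.some.injEq] at hx
    subst hx
    simp only [List.drop_succ_cons, List.drop_zero] at hy
    rw [hhs0] at hy
    simp only [itl, List.head?_cons, Option.some.injEq] at hy
    subst hy
    exact heAB2 u huAB h0 (hhsmem h0 (by rw [hhs0]; simp))
  · -- red case
    have hred : ∀ i j, i ≠ j → ∀ u ∈ P i, ∀ v ∈ P j, c s(u, v) = red := by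
      intro i j hij u hu v hv
      rcases hPedge i j hij u hu v hv with h | h
      · exact h
      · exact absurd ⟨i, j, hij, u, hu, v, hv, h⟩ hblue
    set T := (A ∪ B).toList.take t with hT
    have hTlen : T.length = t := by
      rw [hT, List.length_take, Finset.length_toList]
      omega
    have hTnd : T.Nodup := ((A ∪ B).nodup_toList).sublist (List.take_sublist _ _)
    have hTmem : ∀ a ∈ T, a ∈ A ∪ B := by
      intro a ha
      exact Finset.mem_toList.mp ((List.take_sublist _ _).subset ha)
    set cnt : Fin m → ℕ := fun b => T.countP (fun a => pl a = b) with hcnt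
    have hcntle : ∀ b, cnt b ≤ k - 1 := by
      intro b
      have h1 : cnt b = (T.filter (fun a => pl a = b)).length := by
        rw [hcnt]; exact T.countP_eq_length_filter
      have hnd : (T.filter (fun a => pl a = b)).Nodup := hTnd.filter _
      have hsub : (T.filter (fun a => pl a = b)).toFinset ⊆ P b := by
        intro a ha
        rw [List.mem_toFinset, List.mem_filter] at ha
        obtain ⟨haT, hab⟩ := ha
        have : pl a = b := by simpa using hab
        exact this ▸ hpl a (hTmem a haT)
      have := Finset.card_le_card hsub
      rw [List.toFinset_card_of_nodup hnd] at this
      have := hPcard b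
      omega
    -- choose top three labels
    obtain ⟨i1, -, hi1max⟩ := Finset.exists_max_image Finset.univ cnt ⟨hmInh.some, Finset.mem_univ _⟩
    have hne2 : (Finset.univ.erase i1).Nonempty := by
      rw [← Finset.card_pos, Finset.card_erase_of_mem (Finset.mem_univ _)]
      simp [Fintype.card_fin]
      omega
    obtain ⟨i2, hi2mem, hi2max⟩ := Finset.exists_max_image _ cnt hne2
    have hi2ne : i2 ≠ i1 := (Finset.mem_erase.mp hi2mem).1
    have hne3 : ((Finset.univ.erase i1).erase i2).Nonempty := by
      rw [← Finset.card_pos, Finset.card_erase_of_mem hi2mem,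
        Finset.card_erase_of_mem (Finset.mem_univ _)]
      simp [Fintype.card_fin]
      omega
    obtain ⟨i3, hi3mem, hi3max⟩ := Finset.exists_max_image _ cnt hne3
    have hi3ne2 : i3 ≠ i2 := (Finset.mem_erase.mp hi3mem).1
    have hi3ne1 : i3 ≠ i1 := (Finset.mem_erase.mp (Finset.mem_erase.mp hi3mem).2).1
    have h21 : cnt i2 ≤ cnt i1 := hi1max i2 (Finset.mem_univ _)
    have h32 : cnt i3 ≤ cnt i2 := hi2max i3 (Finset.mem_erase.mp hi3mem).2
    have hother : ∀ b, b ≠ i1 → b ≠ i2 → cnt b ≤ cnt i3 := by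
      intro b hb1 hb2
      exact hi3max b (Finset.mem_erase.mpr ⟨hb2, Finset.mem_erase.mpr ⟨hb1, Finset.mem_univ _⟩⟩)
    -- third class is nonempty
    have hi3pos : 1 ≤ cnt i3 := by
      have hq : T.countP (fun a => decide (pl a = i1) || decide (pl a = i2))
          = cnt i1 + cnt i2 :=
        countP_or_disj T _ _ (by intro a ha; simp at ha ⊢; rw [ha]; exact hi2ne.symm)
      have hlt : cnt i1 + cnt i2 < t := by
        have := hcntle i1
        have := hcntle i2
        omega
      obtain ⟨a, haT, ha1, ha2⟩ : ∃ a ∈ T, pl a ≠ i1 ∧ pl a ≠ i2 := by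
        by_contra hno
        push_neg at hno
        have : T.countP (fun a => decide (pl a = i1) || decide (pl a = i2)) = T.length :=
          List.countP_eq_length.mpr (by
            intro a ha
            by_cases h1 : pl a = i1
            · simp [h1]
            · simp [hno a ha h1])
        omega
      have hpos2 : 1 ≤ cnt (pl a) := by
        rw [hcnt]
        refine List.countP_pos_iff.mpr ⟨a, haT, by simp⟩
      by_cases h3 : pl a = i3
      · rw [h3] at hpos2; omega
      · have := hother (pl a) ha1 ha2
        omega
    have hi2pos : 1 ≤ cnt i2 := le_trans hi3pos h32
    have hi1pos : 1 ≤ cnt i1 := le_trans hi2pos h21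
    -- pick representatives
    obtain ⟨x1, hx1T, hx1p⟩ := List.countP_pos_iff.mp (show 0 < cnt i2 by omega)
    obtain ⟨x2, hx2T, hx2p⟩ := List.countP_pos_iff.mp (show 0 < cnt i1 by omega)
    obtain ⟨x3, hx3T, hx3p⟩ := List.countP_pos_iff.mp (show 0 < cnt i3 by omega)
    have hx1p : pl x1 = i2 := by simpa using hx1p
    have hx2p : pl x2 = i1 := by simpa using hx2p
    have hx3p : pl x3 = i3 := by simpa using hx3p
    have hx12 : x1 ≠ x2 := fun h => hi2ne (by rw [← hx1p, h, hx2p])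
    have hx13 : x1 ≠ x3 := fun h => hi3ne2 (by rw [← hx3p, ← h, hx1p])
    have hx23 : x2 ≠ x3 := fun h => hi3ne1 (by rw [← hx3p, ← h, hx2p])
    set T' := ((T.erase x1).erase x2).erase x3 with hT'
    have hx2e : x2 ∈ T.erase x1 := (List.mem_erase_of_ne hx12.symm).mpr hx2T
    have hx3e : x3 ∈ (T.erase x1).erase x2 :=
      (List.mem_erase_of_ne hx23.symm).mpr ((List.mem_erase_of_ne hx13.symm).mpr hx3T)
    have hperm : T.Perm (x1 :: x2 :: x3 :: T') := by
      refine (List.perm_cons_erase hx1T).trans ?_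
      refine List.Perm.cons x1 ?_
      refine (List.perm_cons_erase hx2e).trans ?_
      exact List.Perm.cons x2 (List.perm_cons_erase hx3e)
    have hT'len : T'.length = t - 3 := by
      have := hperm.length_eq
      simp at this
      omega
    have hcntsplit : ∀ q : V → Bool, T.countP q =
        (if q x1 then 1 else 0) + (if q x2 then 1 else 0) + (if q x3 then 1 else 0)
          + T'.countP q := by
      intro q
      rw [hperm.countP_eq]
      simp [List.countP_cons]
      omega
    set cnt' : Fin m → ℕ := fun b => T'.countP (fun a => pl a = b) with hcnt'
    have hsplit' : ∀ b : Fin m, cnt b =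
        (if pl x1 = b then 1 else 0) + (if pl x2 = b then 1 else 0)
          + (if pl x3 = b then 1 else 0) + cnt' b := by
      intro b
      have := hcntsplit (fun a => decide (pl a = b))
      simpa using this
    have hquad : ∀ b, b ≠ i1 → b ≠ i2 → b ≠ i3 →
        cnt i1 + cnt i2 + cnt i3 + cnt b ≤ t := by
      intro b h1 h2 h3
      have := countP_quad_le T pl i1 i2 i3 b hi2ne.symm hi3ne1.symm (Ne.symm h1)
        hi3ne2.symm (Ne.symm h2) (Ne.symm h3)
      rw [hTlen] at this
      exact this
    have htriple : cnt i1 + cnt i2 + cnt i3 ≤ t := by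
      have := countP_triple_le T pl i1 i2 i3 hi2ne.symm hi3ne1.symm hi3ne2.symm
      rw [hTlen] at this
      exact this
    have hall' : ∀ b : Fin m, cnt' b ≤ (t - 3 + 1) / 2 := by
      intro b
      have hs := hsplit' b
      by_cases hb1 : b = i1
      · have := hcntle i1
        subst hb1
        rw [hx1p, hx2p, hx3p] at hs
        simp [hi2ne, hi3ne1] at hs
        omega
      · by_cases hb2 : b = i2
        · have := hcntle i2
          subst hb2
          rw [hx1p, hx2p, hx3p] at hs
          simp [hi2ne.symm, hi3ne2] at hs
          omega
        · by_cases hb3 : b = i3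
          · have := hcntle i3
            subst hb3
            rw [hx1p, hx2p, hx3p] at hs
            simp [hi3ne1.symm, hi3ne2.symm] at hs
            omega
          · have hq := hquad b hb1 hb2 hb3
            have ho := hother b hb1 hb2
            have hcb : cnt' b ≤ cnt b := by omega
            omega
    have hl3' : cnt' i3 ≤ (t - 3) / 2 := by
      have hs := hsplit' i3
      rw [hx1p, hx2p, hx3p] at hs
      simp [hi3ne1.symm, hi3ne2.symm] at hs
      omega
    obtain ⟨L', hpermL', hchainL', hheadL'⟩ := arrange pl (t - 3) T' i3 hT'len hall' hl3'
    have hT'sub : ∀ a ∈ T', a ∈ T := by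
      intro a ha
      exact List.mem_of_mem_erase (List.mem_of_mem_erase (List.mem_of_mem_erase ha))
    have hT'nd : T'.Nodup := ((hTnd.erase x1).erase x2).erase x3
    have hx1T' : x1 ∉ T' := fun h =>
      (hTnd.not_mem_erase (a := x1)) (List.mem_of_mem_erase (List.mem_of_mem_erase h))
    have hx2T' : x2 ∉ T' := fun h =>
      ((hTnd.erase x1).not_mem_erase (a := x2)) (List.mem_of_mem_erase h)
    have hx3T' : x3 ∉ T' := fun h => (((hTnd.erase x1).erase x2).not_mem_erase (a := x3)) h
    set L := x1 :: x2 :: x3 :: L' with hLdef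
    have hLlen : L.length = t := by
      rw [hLdef]
      simp [hpermL'.length_eq, hT'len]
      omega
    have hmemL' : ∀ a ∈ L', a ∈ T := fun a ha => hT'sub a (hpermL'.subset ha)
    have hLnd : L.Nodup := by
      rw [hLdef]
      refine List.nodup_cons.mpr ⟨?_, List.nodup_cons.mpr ⟨?_, List.nodup_cons.mpr ⟨?_, ?_⟩⟩⟩
      · simp only [List.mem_cons]
        push_neg
        exact ⟨hx12, hx13, fun h => hx1T' (hpermL'.subset h)⟩
      · simp only [List.mem_cons]
        push_neg
        exact ⟨hx23, fun h => hx2T' (hpermL'.subset h)⟩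
      · exact fun h => hx3T' (hpermL'.subset h)
      · exact hpermL'.nodup_iff.mpr hT'nd
    have hchainpl : L.Chain' (fun a b => pl a ≠ pl b) := by
      rw [hLdef]
      refine List.isChain_cons.mpr ⟨?_, List.isChain_cons.mpr ⟨?_, List.isChain_cons.mpr ⟨?_, hchainL'⟩⟩⟩
      · intro y hy
        simp at hy
        subst hy
        rw [hx1p, hx2p]
        exact hi2ne
      · intro y hy
        simp at hy
        subst hy
        rw [hx2p, hx3p]
        exact hi3ne1.symm
      · intro y hy
        have := hheadL' y hy
        rw [hx3p]
        exact fun h => this (h.symm)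
    have hmemLAB : ∀ a ∈ L, a ∈ A ∪ B := by
      intro a ha
      rw [hLdef] at ha
      simp at ha
      rcases ha with h | h | h | h
      · exact h ▸ hTmem x1 hx1T
      · exact h ▸ hTmem x2 hx2T
      · exact h ▸ hTmem x3 hx3T
      · exact hTmem a (hmemL' a h)
    have hchainred : L.Chain' (fun a b => c s(a, b) = red) := by
      refine chain'_of_mem ?_ hchainpl
      intro a ha b hb hab
      exact hred (pl a) (pl b) hab a (hpl a (hmemLAB a ha)) b (hpl b (hmemLAB b hb))
    refine hmono ⟨red, copy_of_list (by omega) hLlen hLnd hchainred ?_⟩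
    intro x y hx hy
    rw [hLdef] at hx hy
    simp only [List.head?_cons, Option.some.injEq] at hx
    subst hx
    simp only [List.drop_succ_cons, List.drop_zero, List.head?_cons, Option.some.injEq] at hy
    subst hy
    exact hred i2 i3 hi3ne2.symm x1 (hx1p ▸ hpl x1 (hTmem x1 hx1T)) x3
      (hx3p ▸ hpl x3 (hTmem x3 hx3T))
end
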